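/- arXiv:1304.3502 — 9 statements merged into one kernel-verified Lean document; each statement's English description precedes it below -/
import Mathlib

section
/- Let Y and X be Polish spaces and let f : Y → X be a continuous open surjection. Then for every comeager subset C of Y, the image f[C] is comeager in X. -/
open Set TopologicalSpace

theorem stmt1 {X Y : Type*} [TopologicalSpace X] [PolishSpace X]
    [TopologicalSpace Y] [PolishSpace Y]
    (f : Y → X) (hcont : Continuous f) (hopen : IsOpenMap f)
    (hsurj : Function.Surjective f)
    (C : Set Y) (hC : C ∈ residual Y) : f '' C ∈ residual X := by
  rw [mem_residual_iff] at hC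
  obtain ⟨S, hSo, hSd, hScount, hSsub⟩ := hC
  -- turn S into a sequence of dense open sets
  obtain ⟨U, hU⟩ := (hScount.insert univ).exists_eq_range (insert_nonempty _ _)
  have hUo : ∀ n, IsOpen (U n) := by
    intro n
    have : U n ∈ insert univ S := hU ▸ mem_range_self n
    rcases this with h | h
    · simp [h]
    · exact hSo _ h
  have hUd : ∀ n, Dense (U n) := by
    intro n
    have : U n ∈ insert univ S := hU ▸ mem_range_self n
    rcases this with h | h
    · simp [h, dense_univ]
    · exact hSd _ h
  have hUsub : (⋂ n, U n) ⊆ C := by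
    refine subset_trans ?_ hSsub
    intro y hy t ht
    have : t ∈ insert univ S := mem_insert_of_mem _ ht
    rw [hU] at this
    obtain ⟨n, rfl⟩ := this
    exact mem_iInter.mp hy n
  -- countable basis of Y
  obtain ⟨b, hbc, -, hb⟩ := exists_countable_basis Y
  obtain ⟨V, hV⟩ := (hbc.insert ∅).exists_eq_range (insert_nonempty _ _)
  have hVo : ∀ k, IsOpen (V k) := by
    intro k
    have : V k ∈ insert ∅ b := hV ▸ mem_range_self k
    rcases this with h | h
    · simp [h]
    · exact hb.isOpen h
  -- the dense open sets in X
  set A : ℕ → ℕ → Set X := fun n k => f '' (V k ∩ U n) ∪ (closure (f '' V k))ᶜ with hA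
  have hAo : ∀ n k, IsOpen (A n k) :=
    fun n k => (hopen _ ((hVo k).inter (hUo n))).union isClosed_closure.isOpen_compl
  have hAd : ∀ n k, Dense (A n k) := by
    intro n k
    rw [dense_iff_inter_open]
    intro W hW hWne
    by_cases h : (W ∩ (closure (f '' V k))ᶜ).Nonempty
    · exact h.mono (inter_subset_inter_right _ subset_union_right)
    · have hWsub : W ⊆ closure (f '' V k) := by
        intro x hx
        by_contra hxc
        exact h ⟨x, hx, hxc⟩
      obtain ⟨x, hxW⟩ := hWne
      obtain ⟨y, hyV, hyW⟩ : (f '' V k ∩ W).Nonempty := by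
        have := hWsub hxW
        rcases mem_closure_iff.mp this W hW hxW with ⟨z, hzW, hzV⟩
        exact ⟨z, hzV, hzW⟩
      obtain ⟨y', hy'V, rfl⟩ := hyV
      -- f ⁻¹' W ∩ V k is nonempty open, meets U n
      have hopenset : IsOpen (f ⁻¹' W ∩ V k) := (hW.preimage hcont).inter (hVo k)
      have hne : (f ⁻¹' W ∩ V k).Nonempty := ⟨y', hyW, hy'V⟩
      obtain ⟨z, ⟨hzW, hzV⟩, hzU⟩ := (hUd n).inter_open_nonempty _ hopenset hne
      exact ⟨f z, hzW, Or.inl ⟨z, ⟨hzV, hzU⟩, rfl⟩⟩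
  -- the comeager set
  have hG : (⋂ n, ⋂ k, A n k) ∈ residual X :=
    countable_iInter_mem.mpr fun n => countable_iInter_mem.mpr fun k =>
      residual_of_dense_open (hAo n k) (hAd n k)
  refine Filter.mem_of_superset hG ?_
  intro x hx
  -- fiber over x
  set F : Set Y := f ⁻¹' {x} with hF
  have hFc : IsClosed F := isClosed_singleton.preimage hcont
  have hFne : F.Nonempty := hsurj x
  haveI : PolishSpace F := hFc.polishSpace
  letI := upgradeIsCompletelyMetrizable F
  haveI : Nonempty F := hFne.to_subtype
  -- each U n is dense in the fiber
  have hdense : ∀ n, Dense ((↑) ⁻¹' U n : Set F) := by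
    intro n
    rw [dense_iff_inter_open]
    rintro O hO hOne
    obtain ⟨O', hO', rfl⟩ := isOpen_induced_iff.mp hO
    obtain ⟨⟨y, hyF⟩, hyO⟩ := hOne
    obtain ⟨v, hvb, hyv, hvO⟩ := hb.exists_subset_of_mem_open hyO hO'
    obtain ⟨k, hk⟩ : ∃ k, V k = v := by
      have : v ∈ insert ∅ b := mem_insert_of_mem _ hvb
      rw [hV] at this; exact this.imp fun k hk => hk
    -- x ∈ closure (f '' V k)
    have hxcl : x ∈ closure (f '' V k) :=
      subset_closure ⟨y, hk ▸ hyv, hyF⟩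
    have hxA := mem_iInter.mp (mem_iInter.mp hx n) k
    rcases hxA with hxA | hxA
    · obtain ⟨z, ⟨hzV, hzU⟩, hzx⟩ := hxA
      exact ⟨⟨z, hzx⟩, hvO (hk ▸ hzV), hzU⟩
    · exact absurd hxcl hxA
  have hBaire : Dense (⋂ n, ((↑) ⁻¹' U n : Set F)) :=
    dense_iInter_of_isOpen (fun n => (hUo n).preimage continuous_subtype_val) hdense
  obtain ⟨⟨z, hzF⟩, hz⟩ := hBaire.nonempty
  refine ⟨z, hUsub ?_, hzF⟩
  exact mem_iInter.mpr fun n => mem_iInter.mp hz n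
end

section
/- Let E, F, and R be equivalence relations on Polish spaces X, Y, and Z respectively, and suppose that F is generically R-ergodic. Suppose there is a Baire measurable function f : Y → X such that (i) f(x) E f(y) whenever x F y, and (ii) for every comeager subset C of Y there are x, y ∈ C with f(x) not E-equivalent to f(y). Then E is not Borel reducible to R. -/
open Filter Topology

/-- A function is Baire measurable if the preimage of every open set is Baire measurable. -/
def BaireMeasurableFun {X Y : Type*} [TopologicalSpace X] [TopologicalSpace Y]
    (f : X → Y) : Prop :=
  ∀ U : Set Y, IsOpen U → BaireMeasurableSet (f ⁻¹' U)

/-- `E` is generically `R`-ergodic. -/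
def GenericallyErgodic {X Z : Type*} [TopologicalSpace X] [TopologicalSpace Z]
    (E : X → X → Prop) (R : Z → Z → Prop) : Prop :=
  ∀ g : X → Z, BaireMeasurableFun g → (∀ x y, E x y → R (g x) (g y)) →
    ∃ C ∈ residual X, ∀ x ∈ C, ∀ y ∈ C, R (g x) (g y)

/-- `E` is Borel reducible to `R`: there is a Borel measurable function `g` with
`x E y ↔ g x R g y`. -/
def BorelReducible {X Z : Type*} [TopologicalSpace X] [TopologicalSpace Z]
    (E : X → X → Prop) (R : Z → Z → Prop) : Prop :=
  ∃ g : X → Z, @Measurable X Z (borel X) (borel Z) g ∧ ∀ x y, E x y ↔ R (g x) (g y)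

lemma baireMeasurable_preimage_borel {X Y : Type*} [TopologicalSpace X] [TopologicalSpace Y]
    {f : Y → X} (hf : BaireMeasurableFun f) {s : Set X}
    (hs : @MeasurableSet X (borel X) s) : BaireMeasurableSet (f ⁻¹' s) := by
  let m : MeasurableSpace X :=
    { MeasurableSet' := fun s => BaireMeasurableSet (f ⁻¹' s)
      measurableSet_empty := by simpa using IsOpen.baireMeasurableSet isOpen_empty
      measurableSet_compl := fun s hs => by
        show BaireMeasurableSet (f ⁻¹' sᶜ); rw [Set.preimage_compl]; exact hs.compl
      measurableSet_iUnion := fun g hg => by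
        show BaireMeasurableSet (f ⁻¹' ⋃ i, g i); rw [Set.preimage_iUnion]; exact BaireMeasurableSet.iUnion hg }
  have : borel X ≤ m := MeasurableSpace.generateFrom_le fun u hu => hf u hu
  exact this _ hs

theorem stmt2 {X Y Z : Type*}
    [TopologicalSpace X] [PolishSpace X] [TopologicalSpace Y] [PolishSpace Y]
    [TopologicalSpace Z] [PolishSpace Z]
    (E : X → X → Prop) (F : Y → Y → Prop) (R : Z → Z → Prop)
    (hE : Equivalence E) (hF : Equivalence F) (hR : Equivalence R)
    (hFR : GenericallyErgodic F R)
    (f : Y → X) (hf : BaireMeasurableFun f)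
    (h1 : ∀ x y, F x y → E (f x) (f y))
    (h2 : ∀ C ∈ residual Y, ∃ x ∈ C, ∃ y ∈ C, ¬ E (f x) (f y)) :
    ¬ BorelReducible E R := by
  rintro ⟨g, hg, hgE⟩
  obtain ⟨C, hC, hCR⟩ := hFR (g ∘ f)
    (fun U hU => baireMeasurable_preimage_borel hf (hg (MeasurableSpace.measurableSet_generateFrom hU)))
    (fun x y hxy => (hgE _ _).mp (h1 x y hxy))
  obtain ⟨x, hx, y, hy, hxyE⟩ := h2 C hC
  exact hxyE ((hgE _ _).mpr (hCR x hx y hy))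
end

section
/- Let E be an equivalence relation on a Polish space X, and let R be an equivalence relation on a Polish space Z such that the relation of ℓ¹-equivalence on (0,1)^ℕ is generically R-ergodic. Suppose there is a Baire measurable function f : (0,1)^ℕ → X such that (i) f(s) E f(t) for all s, t ∈ (0,1)^ℕ with ∑_n |s_n − t_n| < ∞, and (ii) every comeager subset of (0,1)^ℕ contains elements s, t with f(s) not E-equivalent to f(t). Then E is not Borel reducible to R. -/
open Filter Topology

/-- ℓ¹-equivalence of sequences in `(0,1)^ℕ`. -/
def l1Equiv (s t : ℕ → Set.Ioo (0 : ℝ) 1) : Prop :=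
  Summable fun n => |(s n : ℝ) - (t n : ℝ)|

theorem stmt4 {X Z : Type*}
    [TopologicalSpace X] [PolishSpace X] [TopologicalSpace Z] [PolishSpace Z]
    (E : X → X → Prop) (R : Z → Z → Prop)
    (hE : Equivalence E) (hR : Equivalence R)
    (hRerg : GenericallyErgodic l1Equiv R)
    (f : (ℕ → Set.Ioo (0 : ℝ) 1) → X) (hf : BaireMeasurableFun f)
    (h1 : ∀ s t, l1Equiv s t → E (f s) (f t))
    (h2 : ∀ C ∈ residual (ℕ → Set.Ioo (0 : ℝ) 1), ∃ s ∈ C, ∃ t ∈ C, ¬ E (f s) (f t)) :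
    ¬ BorelReducible E R := by
  rintro ⟨g, hg, hgE⟩
  -- The sets whose f-preimage is Baire measurable form a σ-algebra containing opens
  let M : MeasurableSpace X :=
    { MeasurableSet' := fun s => BaireMeasurableSet (f ⁻¹' s)
      measurableSet_empty := by
        simpa using (isOpen_empty (X := (ℕ → Set.Ioo (0:ℝ) 1))).baireMeasurableSet
      measurableSet_compl := fun s hs => by
        simpa [Set.preimage_compl] using hs.compl
      measurableSet_iUnion := fun s hs => by
        simpa [Set.preimage_iUnion] using BaireMeasurableSet.iUnion hs }
  have hle : borel X ≤ M := by
    rw [borel]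
    exact MeasurableSpace.generateFrom_le fun u hu => hf u hu
  have hgf : BaireMeasurableFun (g ∘ f) := by
    intro U hU
    have : @MeasurableSet Z (borel Z) U := MeasurableSpace.measurableSet_generateFrom hU
    exact hle _ (hg this)
  obtain ⟨C, hC, hCR⟩ := hRerg (g ∘ f) hgf (fun x y hxy => (hgE _ _).mp (h1 _ _ hxy))
  obtain ⟨s, hs, t, ht, hst⟩ := h2 C hC
  exact hst ((hgE _ _).mpr (hCR s hs t ht))
end

section
/- Let R be an equivalence relation on a Polish space Z. If the relation of ℓ¹-equivalence on ℝ^ℕ is generically R-ergodic, then the relation of ℓ¹-equivalence on (0,1)^ℕ is generically R-ergodic. -/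
open Filter Topology

/-- ℓ¹-equivalence of sequences of real numbers. -/
def l1EquivR (s t : ℕ → ℝ) : Prop :=
  Summable fun n => |s n - t n|

/-! Auxiliary: an explicit order isomorphism `ℝ ≃o (0,1)` given by
`x ↦ (x/(1+|x|) + 1)/2`, which is `1`-Lipschitz. -/

noncomputable def myphi (x : ℝ) : ℝ := (x / (1 + |x|) + 1) / 2

lemma myphi_mem (x : ℝ) : myphi x ∈ Set.Ioo (0:ℝ) 1 := by
  have h : 0 < 1 + |x| := by positivity
  have h1 : |x / (1 + |x|)| < 1 := by
    rw [abs_div, abs_of_pos h, div_lt_one h]; linarith [abs_nonneg x]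
  rw [abs_lt] at h1
  constructor <;> (unfold myphi; nlinarith [h1.1, h1.2])

lemma myphi_lip (a b : ℝ) : |myphi a - myphi b| ≤ |a - b| := by
  have ha : (0:ℝ) < 1 + |a| := by positivity
  have hb : (0:ℝ) < 1 + |b| := by positivity
  have step1 : |a * |b| - |a| * b| ≤ |a - b| * (|a| + |b|) := by
    rcases le_total 0 a with ha' | ha' <;> rcases le_total 0 b with hb' | hb'
    · rw [abs_of_nonneg ha', abs_of_nonneg hb']
      have : a * b - a * b = 0 := by ring
      rw [this, abs_zero]
      exact mul_nonneg (abs_nonneg _) (by linarith)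
    · rw [abs_of_nonneg ha', abs_of_nonpos hb',
        abs_of_nonneg (show (0:ℝ) ≤ a - b by linarith), abs_le]
      constructor <;> nlinarith [sq_nonneg (a - b), sq_nonneg (a + b)]
    · rw [abs_of_nonpos ha', abs_of_nonneg hb',
        abs_of_nonpos (show a - b ≤ (0:ℝ) by linarith), abs_le]
      constructor <;> nlinarith [sq_nonneg (a - b), sq_nonneg (a + b)]
    · rw [abs_of_nonpos ha', abs_of_nonpos hb']
      have : a * -b - -a * b = 0 := by ring
      rw [this, abs_zero]
      exact mul_nonneg (abs_nonneg _) (by linarith)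
  have key : |a / (1 + |a|) - b / (1 + |b|)| ≤ |a - b| := by
    rw [div_sub_div _ _ ha.ne' hb.ne', abs_div, abs_of_pos (mul_pos ha hb),
      div_le_iff₀ (mul_pos ha hb)]
    have e : a * (1 + |b|) - (1 + |a|) * b = (a - b) + (a * |b| - |a| * b) := by ring
    calc |a * (1 + |b|) - (1 + |a|) * b| ≤ |a - b| + |a * |b| - |a| * b| := by
          rw [e]; exact abs_add_le _ _
      _ ≤ |a - b| + |a - b| * (|a| + |b|) := by linarith
      _ ≤ |a - b| * ((1 + |a|) * (1 + |b|)) := by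
          nlinarith [mul_nonneg (abs_nonneg (a - b)) (mul_nonneg (abs_nonneg a) (abs_nonneg b))]
  have heq : myphi a - myphi b = (a / (1 + |a|) - b / (1 + |b|)) / 2 := by
    unfold myphi; ring
  rw [heq, abs_div, abs_two]
  linarith [abs_nonneg (a - b)]

lemma myphi_mono : StrictMono myphi := by
  have base : StrictMono fun x : ℝ => x / (1 + |x|) := by
    refine strictMono_of_odd_strictMonoOn_nonneg ?_ ?_
    · intro x; simp [abs_neg, neg_div]
    · rintro x (hx : 0 ≤ x) y (hy : 0 ≤ y) hxy
      simp only [abs_of_nonneg hx, abs_of_nonneg hy]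
      rw [div_lt_div_iff₀ (by linarith) (by linarith)]
      nlinarith
  intro a b hab
  unfold myphi
  have := base hab
  simp only at this
  linarith

noncomputable def myphiIso : ℝ ≃o Set.Ioo (0:ℝ) 1 :=
  StrictMono.orderIsoOfRightInverse (Set.codRestrict myphi _ myphi_mem)
    (myphi_mono.codRestrict _)
    (fun y => (2 * (y:ℝ) - 1) / (1 - |2 * (y:ℝ) - 1|))
    (by
      rintro ⟨y, hy1, hy2⟩
      apply Subtype.ext
      set t : ℝ := 2 * y - 1 with ht
      have h1 : |t| < 1 := by rw [abs_lt]; constructor <;> simp only [ht] <;> linarith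
      have h2 : (0:ℝ) < 1 - |t| := by linarith
      show myphi (t / (1 - |t|)) = y
      unfold myphi
      have h3 : |t / (1 - |t|)| = |t| / (1 - |t|) := by rw [abs_div, abs_of_pos h2]
      have h4 : 1 + |t| / (1 - |t|) = 1 / (1 - |t|) := by field_simp; ring
      have h5 : t / (1 - |t|) / (1 / (1 - |t|)) = t := by field_simp
      rw [h3, h4, h5, ht]
      ring)

noncomputable def myphiHomeo : ℝ ≃ₜ Set.Ioo (0:ℝ) 1 := myphiIso.toHomeomorph

noncomputable def bigHomeo : (ℕ → ℝ) ≃ₜ (ℕ → Set.Ioo (0:ℝ) 1) :=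
  Homeomorph.piCongrRight fun _ => myphiHomeo

theorem stmt5 {Z : Type*} [TopologicalSpace Z] [PolishSpace Z]
    (R : Z → Z → Prop) (hR : Equivalence R)
    (h : GenericallyErgodic l1EquivR R) :
    GenericallyErgodic l1Equiv R := by
  intro g hg hinv
  set Φ := bigHomeo with hΦ
  have hg' : BaireMeasurableFun (g ∘ Φ) := by
    intro U hU
    exact (hg U hU).preimage Φ.continuous Φ.isOpenMap
  have hinv' : ∀ x y, l1EquivR x y → R ((g ∘ Φ) x) ((g ∘ Φ) y) := by
    intro x y hxy
    apply hinv
    unfold l1Equiv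
    have hcoe : ∀ z : ℕ → ℝ, ∀ n, ((Φ z n : ℝ)) = myphi (z n) := fun z n => rfl
    simp only [hcoe]
    exact Summable.of_nonneg_of_le (fun n => abs_nonneg _)
      (fun n => myphi_lip (x n) (y n)) hxy
  obtain ⟨C, hC, hCR⟩ := h (g ∘ Φ) hg' hinv'
  refine ⟨Φ.symm ⁻¹' C, ?_, ?_⟩
  · rw [← Φ.residual_map_eq, Filter.mem_map]
    simpa [Set.preimage_preimage] using hC
  · intro x hx y hy
    have := hCR _ hx _ hy
    simpa [Function.comp] using this
end

section
/- If X is a nonmeager subset of (0,1)^ℕ (with the product topology), then there is an uncountable subset Y of X such that for every pair of distinct points s, t of Y one has sup_{n ∈ ℕ} |s_n − t_n| ≥ 1/4. -/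
open Set

noncomputable def far6 (a : Set.Ioo (0 : ℝ) 1) : Set.Ioo (0 : ℝ) 1 :=
  if (a : ℝ) ≤ 1/2 then ⟨7/8, by norm_num⟩ else ⟨1/8, by norm_num⟩

lemma far6_dist (a : Set.Ioo (0 : ℝ) 1) : (1:ℝ)/4 < |(far6 a : ℝ) - a| := by
  unfold far6
  split <;> rename_i h
  · rw [abs_of_nonneg (by simpa using by linarith)]
    simp only []
    linarith
  · push_neg at h
    rw [abs_of_nonpos (by simpa using by linarith)]
    simp only []
    linarith

/-- The closed "1/4-ball" around y. -/
def Cball (y : ℕ → Set.Ioo (0 : ℝ) 1) : Set (ℕ → Set.Ioo (0 : ℝ) 1) :=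
  {t | ∀ n, |(t n : ℝ) - (y n : ℝ)| ≤ 1/4}

lemma Cball_closed (y : ℕ → Set.Ioo (0 : ℝ) 1) : IsClosed (Cball y) := by
  have : Cball y = ⋂ n, (fun t : ℕ → Set.Ioo (0:ℝ) 1 => |(t n : ℝ) - (y n : ℝ)|) ⁻¹'
      (Iic (1/4)) := by
    ext t; simp [Cball]
  rw [this]
  refine isClosed_iInter fun n => IsClosed.preimage ?_ isClosed_Iic
  exact ((continuous_subtype_val.comp (continuous_apply n)).sub continuous_const).abs

lemma Cball_interior (y : ℕ → Set.Ioo (0 : ℝ) 1) : interior (Cball y) = ∅ := by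
  by_contra h
  obtain ⟨f, hf⟩ := nonempty_iff_ne_empty.2 h
  obtain ⟨I, u, hu, hsub⟩ := (isOpen_pi_iff.1 isOpen_interior) f hf
  obtain ⟨n, hn⟩ := I.exists_notMem
  set t : ℕ → Set.Ioo (0:ℝ) 1 := fun m => if m = n then far6 (y n) else f m with ht
  have htmem : t ∈ (I : Set ℕ).pi u := by
    intro i hi
    have : t i = f i := by
      simp only [ht]
      rw [if_neg]; rintro rfl; exact hn hi
    rw [this]; exact (hu i hi).2
  have h4 := interior_subset (hsub htmem) n
  have : t n = far6 (y n) := by simp [ht]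
  rw [this] at h4
  exact absurd h4 (not_le.2 (far6_dist (y n)))

lemma Cball_nowhereDense (y : ℕ → Set.Ioo (0 : ℝ) 1) : IsNowhereDense (Cball y) :=
  ((Cball_closed y).isNowhereDense_iff).2 (Cball_interior y)

lemma bdd6 (s t : ℕ → Set.Ioo (0 : ℝ) 1) :
    BddAbove (range fun n => |(s n : ℝ) - (t n : ℝ)|) := by
  refine ⟨1, ?_⟩
  rintro x ⟨n, rfl⟩
  have h1 := (s n).2.1; have h2 := (s n).2.2
  have h3 := (t n).2.1; have h4 := (t n).2.2
  rw [abs_le]; constructor <;> simp <;> linarith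

theorem stmt6 (X : Set (ℕ → Set.Ioo (0 : ℝ) 1)) (hX : ¬ IsMeagre X) :
    ∃ Y ⊆ X, ¬ Y.Countable ∧
      ∀ s ∈ Y, ∀ t ∈ Y, s ≠ t → (1 : ℝ) / 4 ≤ ⨆ n, |(s n : ℝ) - (t n : ℝ)| := by
  by_contra hcon
  -- The family of separated subsets of X
  set S : Set (Set (ℕ → Set.Ioo (0:ℝ) 1)) :=
    {Y | Y ⊆ X ∧ ∀ s ∈ Y, ∀ t ∈ Y, s ≠ t → (1:ℝ)/4 ≤ ⨆ n, |(s n : ℝ) - (t n : ℝ)|} with hS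
  obtain ⟨M, hM⟩ := zorn_subset S (by
    intro c hc hchain
    refine ⟨⋃₀ c, ⟨?_, ?_⟩, fun s hs => subset_sUnion_of_mem hs⟩
    · intro x hx
      obtain ⟨A, hA, hxA⟩ := hx
      exact (hc hA).1 hxA
    · intro s hs t ht hst
      obtain ⟨A, hA, hsA⟩ := hs
      obtain ⟨B, hB, htB⟩ := ht
      rcases hchain.total hA hB with h | h
      · exact (hc hB).2 s (h hsA) t htB hst
      · exact (hc hA).2 s hsA t (h htB) hst)
  have hMX : M ⊆ X := hM.1.1
  have hMsep := hM.1.2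
  -- M must be countable, else it witnesses the goal
  have hMc : M.Countable := by
    by_contra hMc
    exact hcon ⟨M, hMX, hMc, hMsep⟩
  -- Every point of X lies in some Cball y, y ∈ M
  have hcover : X ⊆ ⋃₀ (Cball '' M) := by
    intro x hx
    by_cases hxM : x ∈ M
    · exact ⟨Cball x, mem_image_of_mem _ hxM, fun n => by simp⟩
    · have hnot : insert x M ∉ S := by
        intro hmem
        exact hxM (hM.2 hmem (subset_insert x M) (mem_insert x M))
      have : ∃ y ∈ M, ¬ ((1:ℝ)/4 ≤ ⨆ n, |(x n : ℝ) - (y n : ℝ)|) := by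
        by_contra hy
        push_neg at hy
        refine hnot ⟨insert_subset hx hMX, ?_⟩
        intro s hs t ht hst
        rcases hs with rfl | hs <;> rcases ht with rfl | ht
        · exact absurd rfl hst
        · exact hy t ht
        · have := hy s hs
          have heq : (⨆ n, |(s n : ℝ) - (t n : ℝ)|) = ⨆ n, |(t n : ℝ) - (s n : ℝ)| := by
            congr 1; ext n; exact abs_sub_comm _ _
          rwa [heq]
        · exact hMsep s hs t ht hst
      obtain ⟨y, hyM, hy⟩ := this
      push_neg at hy
      refine ⟨Cball y, mem_image_of_mem _ hyM, fun n => ?_⟩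
      exact le_of_lt (lt_of_le_of_lt (le_ciSup (bdd6 x y) n) hy)
  exact hX (isMeagre_iff_countable_union_isNowhereDense.2
    ⟨Cball '' M, by rintro t ⟨y, _, rfl⟩; exact Cball_nowhereDense y,
     hMc.image _, hcover⟩)
end

section
/- For every η ∈ (0,1] and every ε > 0 there is δ > 0 such that the following holds: for every unital C*-algebra A, all positive contractions x, b ∈ A with ‖b‖ ≥ η, and every μ ∈ ℂ, if ‖(exp(ix) − μ·1)b‖ ≤ δ then there exists λ ∈ ℂ with ‖(x − λ·1)b‖ ≤ ε. -/
open Complex NormedSpace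

lemma arc_dist (t s : ℝ) (ht : |t - s| ≤ Real.pi) (μ : ℂ) :
    (t - s) ^ 2 ≤ 5 * (Complex.normSq (Complex.exp (Complex.I * t) - μ)
      + Complex.normSq (Complex.exp (Complex.I * s) - μ)) := by
  have hre : ∀ r : ℝ, Complex.exp (Complex.I * r) = Real.cos r + Real.sin r * Complex.I := by
    intro r; rw [mul_comm, Complex.exp_mul_I]; norm_cast
  have hdiff : Complex.normSq (Complex.exp (Complex.I * t) - Complex.exp (Complex.I * s))
      = 2 - 2 * Real.cos (t - s) := by
    rw [hre t, hre s, Real.cos_sub]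
    simp [Complex.normSq_apply, Complex.cos_ofReal_re, Complex.sin_ofReal_re]
    nlinarith [Real.sin_sq_add_cos_sq t, Real.sin_sq_add_cos_sq s]
  have hcos := Real.cos_le_one_sub_mul_cos_sq ht
  set a := ‖Complex.exp (Complex.I * t) - μ‖ with ha
  set b := ‖Complex.exp (Complex.I * s) - μ‖ with hb
  have htri : ‖Complex.exp (Complex.I * t) - Complex.exp (Complex.I * s)‖ ≤ a + b := by
    calc ‖Complex.exp (Complex.I * t) - Complex.exp (Complex.I * s)‖
        ≤ ‖Complex.exp (Complex.I * t) - μ‖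
          + ‖μ - Complex.exp (Complex.I * s)‖ := by
          simpa using norm_sub_le_norm_sub_add_norm_sub (Complex.exp (Complex.I * t)) μ (Complex.exp (Complex.I * s))
      _ = a + b := by rw [ha, hb, norm_sub_rev μ]
  have hsq : Complex.normSq (Complex.exp (Complex.I * t) - Complex.exp (Complex.I * s))
      ≤ (a + b) ^ 2 := by
    rw [← Complex.sq_norm]
    exact pow_le_pow_left₀ (norm_nonneg _) htri 2
  have hπ : Real.pi ^ 2 ≤ 10 := by nlinarith [Real.pi_lt_d2, Real.pi_pos]
  have hπ0 : (0:ℝ) < Real.pi ^ 2 := by positivity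
  have h4 : 4 * (t - s) ^ 2 ≤ Real.pi ^ 2 * (2 - 2 * Real.cos (t - s)) := by
    have h1 : 2 / Real.pi ^ 2 * (t - s) ^ 2 ≤ 1 - Real.cos (t - s) := by linarith
    have h2 := mul_le_mul_of_nonneg_left h1 hπ0.le
    have h3 : Real.pi ^ 2 * (2 / Real.pi ^ 2 * (t - s) ^ 2) = 2 * (t - s) ^ 2 := by
      field_simp
    rw [h3] at h2
    linarith
  have hab : Complex.normSq (Complex.exp (Complex.I * t) - μ) = a ^ 2 := (Complex.sq_norm _).symm
  have hbb : Complex.normSq (Complex.exp (Complex.I * s) - μ) = b ^ 2 := (Complex.sq_norm _).symm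
  rw [hab, hbb]
  have h0a : 0 ≤ a := norm_nonneg _
  have h0b : 0 ≤ b := norm_nonneg _
  nlinarith [sq_nonneg (a - b), sq_nonneg (a + b), hdiff ▸ hsq]


set_option maxHeartbeats 1000000 in
theorem stmt7 (η : ℝ) (hη : η ∈ Set.Ioc (0 : ℝ) 1) (ε : ℝ) (hε : 0 < ε) :
    ∃ δ > (0 : ℝ),
      ∀ (A : Type) [CStarAlgebra A] [PartialOrder A] [StarOrderedRing A],
        ∀ x b : A, 0 ≤ x → ‖x‖ ≤ 1 → 0 ≤ b → ‖b‖ ≤ 1 → η ≤ ‖b‖ →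
          ∀ μ : ℂ, ‖(NormedSpace.exp (Complex.I • x) - μ • (1 : A)) * b‖ ≤ δ →
            ∃ lam : ℂ, ‖(x - lam • (1 : A)) * b‖ ≤ ε := by
  obtain ⟨hη0, hη1⟩ := hη
  refine ⟨ε * η / 4, by positivity, ?_⟩
  intro A _ _ _ x b hx hx1 hb hb1 hbη μ hμ
  set δ : ℝ := ε * η / 4 with hδdef
  have hδ0 : 0 < δ := by positivity
  have hxsa : IsSelfAdjoint x := .of_nonneg hx
  have hxn : IsStarNormal x := hxsa.isStarNormal
  have hbsa : IsSelfAdjoint b := .of_nonneg hb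
  have : Nontrivial A := by
    refine ⟨⟨b, 0, fun h => ?_⟩⟩
    rw [h] at hbη; rw [norm_zero] at hbη; linarith
  -- spectra
  have hspecR : spectrum ℝ x ⊆ Set.Icc 0 1 := by
    intro t htmem
    refine ⟨spectrum_nonneg_of_nonneg hx htmem, ?_⟩
    calc t ≤ |t| := le_abs_self t
      _ = ‖t‖ := (Real.norm_eq_abs t).symm
      _ ≤ ‖x‖ := spectrum.norm_le_norm_of_mem htmem
      _ ≤ 1 := hx1
  have hspecC : ∀ z ∈ spectrum ℂ x, ∃ t ∈ Set.Icc (0:ℝ) 1, z = (t : ℂ) := by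
    intro z hz
    have himg := hxsa.spectrumRestricts.algebraMap_image
    rw [← himg] at hz
    obtain ⟨t, ht, rfl⟩ := hz
    exact ⟨t, hspecR ht, rfl⟩
  -- the exponential as cfc
  set E : ℂ → ℂ := fun z => Complex.exp (Complex.I * z) - μ with hE
  have hIx : IsStarNormal (Complex.I • x) := by
    constructor
    rw [star_smul, hxsa.star_eq, Complex.star_def, Complex.conj_I]
    exact ((Commute.refl x).smul_left (-Complex.I)).smul_right Complex.I
  have hu : cfc (fun z : ℂ => Complex.exp (Complex.I * z)) x = NormedSpace.exp (Complex.I • x) := by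
    have h1 : cfc (fun z : ℂ => Complex.exp (Complex.I • z)) x
        = cfc Complex.exp (Complex.I • x) :=
      cfc_comp_smul Complex.I Complex.exp x (Complex.continuous_exp.continuousOn) hxn
    have h2 : (fun z : ℂ => Complex.exp (Complex.I • z))
        = fun z : ℂ => Complex.exp (Complex.I * z) := by
      ext z; rw [smul_eq_mul]
    rw [← h2, h1, CFC.complex_exp_eq_normedSpace_exp hIx]
  have hc0 : NormedSpace.exp (Complex.I • x) - μ • (1 : A) = cfc E x := by
    rw [hE]
    rw [cfc_sub (fun z : ℂ => Complex.exp (Complex.I * z)) (fun _ => μ) x]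
    rw [hu, cfc_const μ x, Algebra.algebraMap_eq_smul_one]
  -- the closest point on the arc
  obtain ⟨t₀, ht₀mem, ht₀min⟩ := isCompact_Icc.exists_isMinOn (α := ℝ) (s := Set.Icc (0:ℝ) 1)
    ⟨0, by norm_num⟩
    (Continuous.continuousOn (continuous_norm.comp (show Continuous fun t : ℝ => Complex.exp (Complex.I * t) - μ by fun_prop)))
  rw [isMinOn_iff] at ht₀min
  set d : ℝ := ‖Complex.exp (Complex.I * t₀) - μ‖ with hd
  have hd0 : 0 ≤ d := norm_nonneg _
  -- every point of the spectrum has |E z| ≥ d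
  have hEd : ∀ z ∈ spectrum ℂ x, d ≤ ‖E z‖ := by
    intro z hz
    obtain ⟨t, htmem, rfl⟩ := hspecC z hz
    simpa using ht₀min t htmem
  -- bound d via the resolvent
  have hdδ : d * η ≤ δ := by
    by_contra hcon
    push_neg at hcon
    have hdpos : 0 < d := by
      rcases lt_or_ge 0 d with h | h
      · exact h
      · exfalso; nlinarith
    have hne : ∀ z ∈ spectrum ℂ x, E z ≠ 0 := by
      intro z hz h0
      have h1 := hEd z hz
      rw [h0] at h1
      simp at h1
      linarith
    have hcontOn : ContinuousOn (fun z => (E z)⁻¹) (spectrum ℂ x) :=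
      ContinuousOn.inv₀ (Continuous.continuousOn (by fun_prop)) hne
    set v : A := cfc (fun z => (E z)⁻¹) x with hv
    have hvmul : v * cfc E x = 1 := by
      rw [hv, ← cfc_mul _ _ x hcontOn (Continuous.continuousOn (by fun_prop))]
      calc cfc (fun z => (E z)⁻¹ * E z) x = cfc (fun _ : ℂ => (1 : ℂ)) x :=
            cfc_congr (fun z hz => inv_mul_cancel₀ (hne z hz))
        _ = 1 := cfc_one ℂ x
    have hvnorm : ‖v‖ ≤ d⁻¹ := by
      refine norm_cfc_le (by positivity) fun z hz => ?_
      rw [norm_inv]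
      exact inv_anti₀ hdpos (hEd z hz)
    have : η ≤ d⁻¹ * δ := by
      calc η ≤ ‖b‖ := hbη
        _ = ‖v * (cfc E x * b)‖ := by rw [← mul_assoc, hvmul, one_mul]
        _ ≤ ‖v‖ * ‖cfc E x * b‖ := norm_mul_le _ _
        _ ≤ d⁻¹ * δ := by
            refine mul_le_mul hvnorm ?_ (norm_nonneg _) (by positivity)
            rw [← hc0]; exact hμ
    have h2 := mul_le_mul_of_nonneg_left this hd0
    rw [← mul_assoc, mul_inv_cancel₀ hdpos.ne', one_mul] at h2
    linarith
  -- main estimate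
  refine ⟨(t₀ : ℂ), ?_⟩
  have hlam : ((t₀ : ℂ)) • (1 : A) = t₀ • (1 : A) := by
    rw [show ((t₀ : ℂ)) = algebraMap ℝ ℂ t₀ from rfl, algebraMap_smul]
  set w : A := x - t₀ • (1 : A) with hw
  have hwsa : IsSelfAdjoint w := by
    rw [hw]
    simp only [IsSelfAdjoint, star_sub, star_smul, star_one, star_trivial, hxsa.star_eq]
  have hwcfc : cfc (fun t : ℝ => (t - t₀) ^ 2) x = w ^ 2 := by
    have h1 : cfc (fun t : ℝ => t - t₀) x = w := by
      rw [cfc_sub (fun t : ℝ => t) (fun _ => t₀) x, cfc_id' ℝ x, cfc_const t₀ x,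
        Algebra.algebraMap_eq_smul_one, hw]
    rw [← h1, ← cfc_pow (fun t : ℝ => t - t₀) 2 x]
  set g : ℝ → ℝ := fun t => Complex.normSq (Complex.exp (Complex.I * t) - μ) with hg
  have hEcont : ContinuousOn E (spectrum ℂ x) := by
    rw [hE]; exact Continuous.continuousOn (by fun_prop)
  have hEscont : ContinuousOn (fun z => star (E z)) (spectrum ℂ x) := by
    rw [hE]; exact Continuous.continuousOn (by fun_prop)
  have hgcont : ContinuousOn g (spectrum ℝ x) := by
    rw [hg]
    exact (Complex.continuous_normSq.comp
      (show Continuous fun t : ℝ => Complex.exp (Complex.I * t) - μ by fun_prop)).continuousOn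
  have hgcfc : cfc g x = star (cfc E x) * cfc E x := by
    rw [← cfc_star E x, ← cfc_mul _ _ x hEscont hEcont]
    rw [cfc_real_eq_complex g hxsa]
    refine cfc_congr fun z hz => ?_
    obtain ⟨t, htmem, rfl⟩ := hspecC z hz
    rw [Complex.ofReal_re]
    rw [hg, hE]
    simp only []
    rw [Complex.star_def]
    exact Complex.normSq_eq_conj_mul_self
  have hmono : cfc (fun t : ℝ => (t - t₀) ^ 2) x
      ≤ cfc (fun t : ℝ => 5 * g t + 5 * d ^ 2) x := by
    refine cfc_mono (fun t htmem => ?_) (by fun_prop)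
      ((continuousOn_const.mul hgcont).add continuousOn_const)
    have ht01 := hspecR htmem
    have hdist : |t - t₀| ≤ Real.pi := by
      rw [abs_le]
      constructor <;> nlinarith [ht01.1, ht01.2, ht₀mem.1, ht₀mem.2, Real.pi_gt_three]
    have := arc_dist t t₀ hdist μ
    rw [hg]
    have hd2 : Complex.normSq (Complex.exp (Complex.I * t₀) - μ) = d ^ 2 :=
      (Complex.sq_norm _).symm
    rw [hd2] at this
    linarith
  have hrhs : cfc (fun t : ℝ => 5 * g t + 5 * d ^ 2) x
      = (5 : ℝ) • (star (cfc E x) * cfc E x) + (5 * d ^ 2) • (1 : A) := by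
    rw [cfc_add (p := (IsSelfAdjoint : A → Prop)) x (fun t => 5 * g t) (fun _ => 5 * d ^ 2) (continuousOn_const.mul hgcont)
      continuousOn_const, cfc_const_mul (p := (IsSelfAdjoint : A → Prop)) 5 g x hgcont, cfc_const (R := ℝ) _ x, hgcfc,
      Algebra.algebraMap_eq_smul_one]
  -- conjugation by b
  have hconj : b * w ^ 2 * b ≤ (5 : ℝ) • (b * (star (cfc E x) * cfc E x) * b)
      + (5 * d ^ 2) • (b * b) := by
    have := star_left_conjugate_le_conjugate (hwcfc ▸ hrhs ▸ hmono) b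
    rw [hbsa.star_eq] at this
    calc b * w ^ 2 * b ≤ b * ((5 : ℝ) • (star (cfc E x) * cfc E x) + (5 * d ^ 2) • 1) * b :=
          this
      _ = (5 : ℝ) • (b * (star (cfc E x) * cfc E x) * b) + (5 * d ^ 2) • (b * b) := by
          simp only [mul_add, add_mul, mul_smul_comm, smul_mul_assoc, mul_one]
  -- norms
  have hkey : ‖w * b‖ ^ 2 ≤ 5 * δ ^ 2 + 5 * d ^ 2 := by
    have e1 : star (w * b) * (w * b) = b * w ^ 2 * b := by
      rw [star_mul, hbsa.star_eq, hwsa.star_eq, sq]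
      noncomm_ring
    have e2 : ‖w * b‖ ^ 2 = ‖b * w ^ 2 * b‖ := by
      rw [← e1, CStarRing.norm_star_mul_self, sq]
    have e3 : b * (star (cfc E x) * cfc E x) * b = star (cfc E x * b) * (cfc E x * b) := by
      rw [star_mul, hbsa.star_eq]
      noncomm_ring
    have e4 : ‖b * w ^ 2 * b‖ ≤ ‖(5 : ℝ) • (b * (star (cfc E x) * cfc E x) * b)
        + (5 * d ^ 2) • (b * b)‖ := by
      refine CStarAlgebra.norm_le_norm_of_nonneg_of_le ?_ hconj
      rw [← e1]
      exact star_mul_self_nonneg (w * b)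
    have e5 : ‖cfc E x * b‖ ≤ δ := by rw [← hc0]; exact hμ
    have e6 : ‖(5 : ℝ) • (b * (star (cfc E x) * cfc E x) * b) + (5 * d ^ 2) • (b * b)‖
        ≤ 5 * δ ^ 2 + 5 * d ^ 2 := by
      refine (norm_add_le _ _).trans ?_
      have t1 : ‖(5 : ℝ) • (b * (star (cfc E x) * cfc E x) * b)‖ ≤ 5 * δ ^ 2 := by
        rw [norm_smul, e3, CStarRing.norm_star_mul_self, Real.norm_eq_abs,
          _root_.abs_of_nonneg (by norm_num : (0:ℝ) ≤ 5)]
        nlinarith [e5, norm_nonneg (cfc E x * b)]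
      have t2 : ‖(5 * d ^ 2) • (b * b)‖ ≤ 5 * d ^ 2 := by
        rw [norm_smul, Real.norm_eq_abs,
          _root_.abs_of_nonneg (by positivity : (0:ℝ) ≤ 5 * d ^ 2)]
        have hbb : ‖b * b‖ ≤ 1 :=
          le_trans (norm_mul_le _ _) (by nlinarith [norm_nonneg b])
        nlinarith [norm_nonneg (b * b), sq_nonneg d]
      linarith
    rw [e2]
    exact e4.trans e6
  -- finish
  have hηd : d ^ 2 * η ^ 2 ≤ δ ^ 2 := by
    have h := mul_self_le_mul_self (mul_nonneg hd0 hη0.le) hdδ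
    nlinarith [h]
  have hgoal : ‖(x - (t₀:ℂ) • (1:A)) * b‖ = ‖w * b‖ := by rw [hlam, hw]
  rw [hgoal]
  set N : ℝ := ‖w * b‖ with hNdef
  have hN : 0 ≤ N := norm_nonneg (w * b)
  have h2 : N ^ 2 * η ^ 2 ≤ 5 * δ ^ 2 * η ^ 2 + 5 * d ^ 2 * η ^ 2 := by
    have := mul_le_mul_of_nonneg_right hkey (sq_nonneg η)
    nlinarith
  have hη2 : η ^ 2 ≤ 1 := by nlinarith
  have h4 : N ^ 2 * η ^ 2 ≤ 10 * δ ^ 2 := by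
    nlinarith [mul_nonneg (sq_nonneg δ) (sub_nonneg.2 hη2), hηd]
  have h3 : δ ^ 2 * 16 = ε ^ 2 * η ^ 2 := by rw [hδdef]; ring
  have h5 : N ^ 2 ≤ 5 / 8 * ε ^ 2 := by nlinarith [mul_pos hη0 hη0]
  nlinarith [sq_nonneg (N - ε)]
end

section
/- Let A be a C*-algebra, let (a_i)_{i∈ℕ} be a sequence that is dense in the closed unit ball of A, and let (x_n)_{n∈ℕ} be a sequence of positive contractions in A satisfying x_n x_m = 0 for all n ≠ m and ‖x_n a_i − a_i x_n‖ ≤ 2^{−n} for all i ≤ n. Let t : ℕ → [−1,1]. For each n set σ_n = ∑_{k=1}^{n} t_k x_k and u_n = exp(iσ_n), a unitary element of the unitization Ã of A. Then there exists a *-algebra automorphism α of A such that for every a ∈ A, ‖α(a) − u_n a u_n*‖ → 0 as n → ∞ (where u_n a u_n* is computed in à and lies in A, since A is an ideal in Ã). -/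
open Filter Topology
open NormedSpace


lemma pow_comm_bound {B : Type*} [NormedRing B] [NormOneClass B] (z b : B) (n : ℕ) :
    ‖z ^ n * b - b * z ^ n‖ ≤ n * ‖z‖ ^ (n - 1) * ‖z * b - b * z‖ := by
  induction n with
  | zero => simp
  | succ n ih =>
    have h : z ^ (n+1) * b - b * z ^ (n+1) =
        z * (z ^ n * b - b * z ^ n) + (z * b - b * z) * z ^ n := by
      rw [pow_succ, show z ^ n * z = z * z ^ n from (Commute.self_pow z n).symm]
      noncomm_ring
    rw [h]
    calc ‖z * (z ^ n * b - b * z ^ n) + (z * b - b * z) * z ^ n‖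
        ≤ ‖z * (z ^ n * b - b * z ^ n)‖ + ‖(z * b - b * z) * z ^ n‖ := norm_add_le _ _
      _ ≤ ‖z‖ * ‖z ^ n * b - b * z ^ n‖ + ‖z * b - b * z‖ * ‖z‖ ^ n := by
          gcongr
          · exact norm_mul_le _ _
          · exact (norm_mul_le _ _).trans (by gcongr; exact norm_pow_le z n)
      _ ≤ ‖z‖ * (n * ‖z‖ ^ (n - 1) * ‖z * b - b * z‖) + ‖z * b - b * z‖ * ‖z‖ ^ n := by
          have := norm_nonneg z
          gcongr
      _ ≤ (n+1 : ℕ) * ‖z‖ ^ ((n+1) - 1) * ‖z * b - b * z‖ := by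
          rcases Nat.eq_zero_or_pos n with h0 | h0
          · subst h0; simp
          · have hzz : ‖z‖ * ‖z‖ ^ (n - 1) = ‖z‖ ^ n := by
              rw [← pow_succ']
              congr 1
              omega
            have : ‖z‖ * (n * ‖z‖ ^ (n - 1) * ‖z * b - b * z‖) + ‖z * b - b * z‖ * ‖z‖ ^ n
                = ((n:ℝ) + 1) * ‖z‖ ^ n * ‖z * b - b * z‖ := by
              rw [← hzz]; ring
            rw [this]
            push_cast
            simp

lemma exp_comm_bound {B : Type*} [NormedRing B] [NormOneClass B] [NormedAlgebra ℂ B]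
    [CompleteSpace B] {z : B} (hz : ‖z‖ ≤ 1) (b : B) :
    ‖exp z * b - b * exp z‖ ≤ Real.exp 1 * ‖z * b - b * z‖ := by
  have hsum : Summable fun n : ℕ => (((n.factorial : ℂ))⁻¹ • z ^ n) :=
    expSeries_summable' (𝕂 := ℂ) z
  have hsum1 : Summable fun n : ℕ => (((n.factorial : ℂ))⁻¹ • z ^ n) * b := hsum.mul_right b
  have hsum2 : Summable fun n : ℕ => b * (((n.factorial : ℂ))⁻¹ • z ^ n) := hsum.mul_left b
  have hexp : exp z = ∑' n : ℕ, ((n.factorial : ℂ))⁻¹ • z ^ n := by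
    rw [exp_eq_tsum ℂ]
  have h1 : exp z * b = ∑' n : ℕ, (((n.factorial : ℂ))⁻¹ • z ^ n) * b := by
    rw [hexp, hsum.tsum_mul_right b]
  have h2 : b * exp z = ∑' n : ℕ, b * (((n.factorial : ℂ))⁻¹ • z ^ n) := by
    rw [hexp, hsum.tsum_mul_left b]
  have hdiff : exp z * b - b * exp z
      = ∑' n : ℕ, ((((n.factorial : ℂ))⁻¹ • z ^ n) * b - b * (((n.factorial : ℂ))⁻¹ • z ^ n)) := by
    rw [h1, h2, ← Summable.tsum_sub hsum1 hsum2]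
  -- term rewriting
  have hterm : ∀ n : ℕ, (((n.factorial : ℂ))⁻¹ • z ^ n) * b - b * (((n.factorial : ℂ))⁻¹ • z ^ n)
      = ((n.factorial : ℂ))⁻¹ • (z ^ n * b - b * z ^ n) := by
    intro n
    rw [smul_mul_assoc, mul_smul_comm, smul_sub]
  set C := ‖z * b - b * z‖ with hC
  have hCnn : 0 ≤ C := norm_nonneg _
  have hbound : ∀ n : ℕ, ‖((n.factorial : ℂ))⁻¹ • (z ^ n * b - b * z ^ n)‖ ≤ (((n.factorial : ℝ))⁻¹ * n) * C := by
    intro n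
    rw [norm_smul]
    have h3 : ‖((n.factorial : ℂ))⁻¹‖ = ((n.factorial : ℝ))⁻¹ := by
      rw [norm_inv]
      norm_num
    rw [h3]
    have h4 : ‖z ^ n * b - b * z ^ n‖ ≤ (n : ℝ) * C := by
      refine (pow_comm_bound z b n).trans ?_
      rw [hC]
      have : ‖z‖ ^ (n - 1) ≤ 1 := pow_le_one₀ (norm_nonneg z) hz
      calc (n : ℝ) * ‖z‖ ^ (n-1) * ‖z * b - b * z‖ ≤ (n:ℝ) * 1 * ‖z * b - b * z‖ := by
            gcongr
        _ = (n : ℝ) * ‖z * b - b * z‖ := by ring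
    calc ((n.factorial : ℝ))⁻¹ * ‖z ^ n * b - b * z ^ n‖ ≤ ((n.factorial : ℝ))⁻¹ * ((n:ℝ) * C) := by
          gcongr
      _ = (((n.factorial : ℝ))⁻¹ * n) * C := by ring
  -- summability of the factorial bound
  have hfact : Summable (fun n : ℕ => ((n.factorial : ℝ))⁻¹) := by
    simpa using Real.summable_pow_div_factorial 1
  have hshift : ∀ n : ℕ, ((((n+1).factorial : ℝ))⁻¹ * (n+1 : ℕ)) = ((n.factorial : ℝ))⁻¹ := by
    intro n
    rw [Nat.factorial_succ]
    push_cast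
    rw [mul_inv]
    field_simp
  have hg : Summable (fun n : ℕ => ((n.factorial : ℝ))⁻¹ * n) := by
    rw [← summable_nat_add_iff 1]
    refine hfact.congr fun n => ?_
    rw [← hshift n]
  have hgsum : ∑' n : ℕ, (((n.factorial : ℝ))⁻¹ * n) = Real.exp 1 := by
    rw [Summable.tsum_eq_zero_add hg]
    simp only [hshift]
    simp only [Nat.cast_zero, mul_zero, zero_add]
    rw [Real.exp_eq_exp_ℝ, exp_eq_tsum ℝ]
    simp [smul_eq_mul]
  rw [hdiff]
  simp only [hterm]
  have hsum3 : Summable fun n : ℕ => ((n.factorial : ℂ))⁻¹ • (z ^ n * b - b * z ^ n) := by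
    simpa only [hterm] using (hsum1.sub hsum2)
  calc ‖∑' n : ℕ, ((n.factorial : ℂ))⁻¹ • (z ^ n * b - b * z ^ n)‖
      ≤ ∑' n : ℕ, ‖((n.factorial : ℂ))⁻¹ • (z ^ n * b - b * z ^ n)‖ := by
        refine norm_tsum_le_tsum_norm ?_
        exact Summable.of_nonneg_of_le (fun n => norm_nonneg _) hbound (hg.mul_right C)
    _ ≤ ∑' n : ℕ, (((n.factorial : ℝ))⁻¹ * n) * C := by
        refine Summable.tsum_le_tsum hbound ?_ (hg.mul_right C)
        exact Summable.of_nonneg_of_le (fun n => norm_nonneg _) hbound (hg.mul_right C)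
    _ = (∑' n : ℕ, (((n.factorial : ℝ))⁻¹ * n)) * C := by rw [tsum_mul_right]
    _ = Real.exp 1 * C := by rw [hgsum]


section AuxCStar

variable {A : Type*} [NonUnitalCStarAlgebra A] [PartialOrder A] [StarOrderedRing A]

lemma sq_sq_le_sq {y : A} (hy : 0 ≤ y) (hy1 : ‖y‖ ≤ 1) : (y * y) * (y * y) ≤ y * y := by
  have hsa : IsSelfAdjoint y := .of_nonneg hy
  have hspec : ∀ r ∈ quasispectrum ℝ y, 0 ≤ r ∧ r ≤ 1 := by
    intro r hr
    rw [Unitization.quasispectrum_eq_spectrum_inr' ℝ ℂ y] at hr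
    constructor
    · exact spectrum_nonneg_of_nonneg (Unitization.inr_nonneg_iff.mpr hy) hr
    · calc r ≤ ‖r‖ := Real.le_norm_self r
        _ ≤ ‖(y : Unitization ℂ A)‖ := spectrum.norm_le_norm_of_mem hr
        _ = ‖y‖ := Unitization.norm_inr y
        _ ≤ 1 := hy1
  have h2 : cfcₙ (fun r : ℝ => r * r) y = y * y := by
    rw [cfcₙ_mul (fun r : ℝ => r) (fun r : ℝ => r) y, cfcₙ_id' ℝ y]
  have h4 : cfcₙ (fun r : ℝ => (r * r) * (r * r)) y = (y * y) * (y * y) := by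
    rw [cfcₙ_mul (fun r : ℝ => r * r) (fun r : ℝ => r * r) y, h2]
  rw [← h4]
  conv_rhs => rw [← h2]
  refine cfcₙ_mono fun r hr => ?_
  obtain ⟨h0, h1⟩ := hspec r hr
  nlinarith [sq_nonneg r, sq_nonneg (r*r), mul_le_one₀ h1 h0 h1]

lemma orth_sum_norm_le_one (x : ℕ → A) (t : ℕ → ℝ)
    (hx_pos : ∀ n, 0 ≤ x n) (hx_norm : ∀ n, ‖x n‖ ≤ 1)
    (hx_orth : ∀ m n, m ≠ n → x m * x n = 0)
    (ht : ∀ n, |t n| ≤ 1) (F : Finset ℕ) :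
    ‖∑ k ∈ F, t k • x k‖ ≤ 1 := by
  set s := ∑ k ∈ F, t k • x k with hs
  have hxsa : ∀ k, IsSelfAdjoint (x k) := fun k => .of_nonneg (hx_pos k)
  have hssa : IsSelfAdjoint s := by
    rw [hs, IsSelfAdjoint, star_sum]
    exact Finset.sum_congr rfl fun k _ => by
      rw [star_smul, star_trivial, (hxsa k).star_eq]
  have hdiag : ∀ (y : ℕ → A), (∀ m n, m ≠ n → y m * y n = 0) →
      (∑ j ∈ F, y j) * (∑ k ∈ F, y k) = ∑ k ∈ F, y k * y k := by
    intro y hy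
    rw [Finset.sum_mul_sum]
    refine Finset.sum_congr rfl fun j hj => ?_
    rw [Finset.sum_eq_single j ?hz1 ?hz2]
    case hz1 => intro k hk hkj; exact hy j k hkj.symm
    case hz2 => intro hj'; exact absurd hj hj'
  have hss : s * s = ∑ k ∈ F, (t k * t k) • (x k * x k) := by
    rw [hs, hdiag (fun k => t k • x k)
      (fun m n hmn => by rw [smul_mul_smul_comm, hx_orth m n hmn, smul_zero])]
    exact Finset.sum_congr rfl fun k _ => smul_mul_smul_comm (t k) (x k) (t k) (x k)
  set p := ∑ k ∈ F, x k * x k with hp_def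
  have hxx_nonneg : ∀ k, 0 ≤ x k * x k := fun k => by
    simpa [(hxsa k).star_eq] using star_mul_self_nonneg (x k)
  have hp_nonneg : 0 ≤ p := Finset.sum_nonneg fun k _ => hxx_nonneg k
  have hp_sa : IsSelfAdjoint p := .of_nonneg hp_nonneg
  have h1 : s * s ≤ p := by
    rw [hss, hp_def]
    refine Finset.sum_le_sum fun k _ => ?_
    have h := smul_nonneg (show (0:ℝ) ≤ 1 - t k * t k by
      nlinarith [abs_le.mp (ht k)]) (hxx_nonneg k)
    rw [sub_smul, one_smul, sub_nonneg] at h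
    exact h
  have hss_nonneg : 0 ≤ s * s := by
    simpa [hssa.star_eq] using star_mul_self_nonneg s
  have hpp_le : p * p ≤ p := by
    rw [hp_def, hdiag (fun k => x k * x k) (fun m n hmn => by
      show (x m * x m) * (x n * x n) = 0
      rw [mul_assoc, ← mul_assoc (x m) (x n) (x n), hx_orth m n hmn, zero_mul, mul_zero])]
    exact Finset.sum_le_sum fun k _ => sq_sq_le_sq (hx_pos k) (hx_norm k)
  have hpp_nonneg : 0 ≤ p * p := by
    simpa [hp_sa.star_eq] using star_mul_self_nonneg p
  have hnp : ‖p‖ * ‖p‖ ≤ ‖p‖ := by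
    have h := CStarAlgebra.norm_le_norm_of_nonneg_of_le hpp_nonneg hpp_le
    rwa [show p * p = star p * p from by rw [hp_sa.star_eq],
      CStarRing.norm_star_mul_self] at h
  have hpnorm : ‖p‖ ≤ 1 := by nlinarith [norm_nonneg p]
  have h2 : ‖s * s‖ ≤ ‖p‖ := CStarAlgebra.norm_le_norm_of_nonneg_of_le hss_nonneg h1
  have h3 : ‖s * s‖ = ‖s‖ * ‖s‖ := by
    rw [show s * s = star s * s from by rw [hssa.star_eq], CStarRing.norm_star_mul_self]
  nlinarith [norm_nonneg s]


end AuxCStar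

lemma aux_main {A : Type*} [NonUnitalCStarAlgebra A] [PartialOrder A] [StarOrderedRing A]
    (a : ℕ → A) (ha_norm : ∀ i, ‖a i‖ ≤ 1)
    (ha_dense : ∀ b : A, ‖b‖ ≤ 1 → ∀ ε > (0 : ℝ), ∃ i, ‖b - a i‖ < ε)
    (x : ℕ → A) (hx_pos : ∀ n, 0 ≤ x n) (hx_norm : ∀ n, ‖x n‖ ≤ 1)
    (hx_orth : ∀ m n, m ≠ n → x m * x n = 0)
    (hx_comm : ∀ n i, i ≤ n → ‖x n * a i - a i * x n‖ ≤ ((2 : ℝ) ^ n)⁻¹)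
    (t : ℕ → ℝ) (ht : ∀ n, |t n| ≤ 1) :
    ∀ b : A, ∃ l : A,
      Tendsto (fun n =>
          exp (Complex.I • ((∑ k ∈ Finset.range n, t k • x k : A) : Unitization ℂ A)) *
            (b : Unitization ℂ A) *
            star (exp (Complex.I • ((∑ k ∈ Finset.range n, t k • x k : A) : Unitization ℂ A))))
        atTop (𝓝 (l : Unitization ℂ A)) := by
  let +nondep : NormedAlgebra ℚ (Unitization ℂ A) := .restrictScalars ℚ ℂ (Unitization ℂ A)
  let s : ℕ → ℕ → A := fun m n => ∑ k ∈ Finset.Ico m n, t k • x k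
  let u : ℕ → Unitization ℂ A := fun n => exp (Complex.I • ((s 0 n : A) : Unitization ℂ A))
  have hrange : ∀ n, (∑ k ∈ Finset.range n, t k • x k : A) = s 0 n := fun n => by
    simp only [s, Finset.range_eq_Ico]
  have hxsa : ∀ k, IsSelfAdjoint (x k) := fun k => .of_nonneg (hx_pos k)
  have hsa : ∀ m n, IsSelfAdjoint (s m n) := by
    intro m n
    rw [IsSelfAdjoint, star_sum]
    exact Finset.sum_congr rfl fun k _ => by
      rw [star_smul, star_trivial, (hxsa k).star_eq]
  have hSsa : ∀ m n, IsSelfAdjoint ((s m n : A) : Unitization ℂ A) := fun m n => (hsa m n).inr ℂ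
  have hnorm1 : ∀ m n, ‖s m n‖ ≤ 1 := fun m n =>
    orth_sum_norm_le_one x t hx_pos hx_norm hx_orth ht _
  have horth : ∀ m n m' n', (n ≤ m' ∨ n' ≤ m) → s m n * s m' n' = 0 := by
    intro m n m' n' h
    rw [Finset.sum_mul_sum]
    refine Finset.sum_eq_zero fun j hj => Finset.sum_eq_zero fun k hk => ?_
    have hj' := Finset.mem_Ico.mp hj
    have hk' := Finset.mem_Ico.mp hk
    rw [smul_mul_smul_comm, hx_orth j k (by omega), smul_zero]
  have hunit : ∀ m n,
      exp (Complex.I • ((s m n : A) : Unitization ℂ A)) ∈ unitary (Unitization ℂ A) :=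
    fun m n => exp_mem_unitary_of_mem_skewAdjoint
      ((hSsa m n).smul_mem_skewAdjoint Complex.conj_I)
  have hcomm0 : ∀ m n, m ≤ n → Commute (Complex.I • ((s 0 m : A) : Unitization ℂ A))
      (Complex.I • ((s m n : A) : Unitization ℂ A)) := by
    intro m n h
    unfold Commute SemiconjBy
    rw [smul_mul_smul_comm, smul_mul_smul_comm, ← Unitization.inr_mul, ← Unitization.inr_mul,
      horth 0 m m n (Or.inl le_rfl), horth m n 0 m (Or.inr le_rfl)]
  have hsplit : ∀ m n, m ≤ n →
      u n = u m * exp (Complex.I • ((s m n : A) : Unitization ℂ A)) := by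
    intro m n h
    have hadd : s 0 n = s 0 m + s m n :=
      (Finset.sum_Ico_consecutive _ (Nat.zero_le m) h).symm
    show exp (Complex.I • ((s 0 n : A) : Unitization ℂ A)) = _
    rw [hadd, Unitization.inr_add, smul_add, exp_add_of_commute (hcomm0 m n h)]
  have hkey : ∀ (b : A) (m n : ℕ), m ≤ n →
      ‖u n * (b : Unitization ℂ A) * star (u n) - u m * (b : Unitization ℂ A) * star (u m)‖
        ≤ Real.exp 1 * ‖s m n * b - b * s m n‖ := by
    intro b m n hmn
    set v := exp (Complex.I • ((s m n : A) : Unitization ℂ A)) with hv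
    have hvu : v ∈ unitary _ := hunit m n
    have huu : u m ∈ unitary _ := hunit 0 m
    have hvv : v * star v = 1 := Unitary.mul_star_self_of_mem hvu
    have hdiff : u n * (b : Unitization ℂ A) * star (u n)
          - u m * (b : Unitization ℂ A) * star (u m)
        = u m * ((v * (b : Unitization ℂ A) - (b : Unitization ℂ A) * v) * star v)
          * star (u m) := by
      rw [hsplit m n hmn, ← hv, star_mul, sub_mul, mul_assoc (b : Unitization ℂ A) v (star v),
        hvv, mul_one, mul_sub, sub_mul]
      noncomm_ring
    rw [hdiff, CStarRing.norm_mul_mem_unitary _ (Unitary.star_mem huu),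
      CStarRing.norm_mem_unitary_mul _ huu,
      CStarRing.norm_mul_mem_unitary _ (Unitary.star_mem hvu)]
    have hz : ‖Complex.I • ((s m n : A) : Unitization ℂ A)‖ ≤ 1 := by
      rw [norm_smul, Complex.norm_I, one_mul, Unitization.norm_inr]
      exact hnorm1 m n
    have hb := exp_comm_bound hz (b : Unitization ℂ A)
    rw [← hv] at hb
    have e2 : (Complex.I • ((s m n : A) : Unitization ℂ A)) * (b : Unitization ℂ A)
          - (b : Unitization ℂ A) * (Complex.I • ((s m n : A) : Unitization ℂ A))
        = Complex.I • ((s m n * b - b * s m n : A) : Unitization ℂ A) := by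
      rw [smul_mul_assoc, mul_smul_comm, ← smul_sub]
      rw [Unitization.inr_sub, Unitization.inr_mul, Unitization.inr_mul]
    rw [e2, norm_smul, Complex.norm_I, one_mul, Unitization.norm_inr] at hb
    exact hb
  have hgeom : ∀ m n : ℕ, ∑ k ∈ Finset.Ico m n, ((2:ℝ)^k)⁻¹ ≤ 2 * ((2:ℝ)^m)⁻¹ := by
    intro m n
    have h := geom_sum_Ico_le_of_lt_one (x := (2:ℝ)⁻¹) (by norm_num) (by norm_num) (m := m) (n := n)
    simp only [inv_pow] at h
    calc ∑ k ∈ Finset.Ico m n, ((2:ℝ)^k)⁻¹ ≤ ((2:ℝ)^m)⁻¹ / (1 - 2⁻¹) := h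
      _ = 2 * ((2:ℝ)^m)⁻¹ := by rw [show (1:ℝ) - 2⁻¹ = 2⁻¹ by norm_num]; rw [div_eq_mul_inv, inv_inv]; ring
  have hcomm_ai : ∀ i m n, i ≤ m → ‖s m n * a i - a i * s m n‖ ≤ 2 * ((2:ℝ)^m)⁻¹ := by
    intro i m n him
    have hrw : s m n * a i - a i * s m n
        = ∑ k ∈ Finset.Ico m n, t k • (x k * a i - a i * x k) := by
      show (∑ k ∈ Finset.Ico m n, t k • x k) * a i - a i * (∑ k ∈ Finset.Ico m n, t k • x k) = _
      rw [Finset.sum_mul, Finset.mul_sum, ← Finset.sum_sub_distrib]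
      exact Finset.sum_congr rfl fun k _ => by rw [smul_mul_assoc, mul_smul_comm, smul_sub]
    rw [hrw]
    calc ‖∑ k ∈ Finset.Ico m n, t k • (x k * a i - a i * x k)‖
        ≤ ∑ k ∈ Finset.Ico m n, ‖t k • (x k * a i - a i * x k)‖ := norm_sum_le _ _
      _ ≤ ∑ k ∈ Finset.Ico m n, ((2:ℝ)^k)⁻¹ := by
          refine Finset.sum_le_sum fun k hk => ?_
          rw [norm_smul, Real.norm_eq_abs]
          have hk1 : i ≤ k := le_trans him (Finset.mem_Ico.mp hk).1
          calc |t k| * ‖x k * a i - a i * x k‖ ≤ 1 * ((2:ℝ)^k)⁻¹ :=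
                mul_le_mul (ht k) (hx_comm k i hk1) (norm_nonneg _) zero_le_one
            _ = ((2:ℝ)^k)⁻¹ := one_mul _
      _ ≤ 2 * ((2:ℝ)^m)⁻¹ := hgeom m n
  have hcomm_b : ∀ (b : A), ‖b‖ ≤ 1 → ∀ ε > (0:ℝ), ∃ i : ℕ, ∀ m n, i ≤ m →
      ‖s m n * b - b * s m n‖ ≤ 2 * ((2:ℝ)^m)⁻¹ + ε := by
    intro b hb ε hε
    obtain ⟨i, hi⟩ := ha_dense b hb (ε/4) (by linarith)
    refine ⟨i, fun m n him => ?_⟩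
    have hsplit2 : s m n * b - b * s m n
        = (s m n * a i - a i * s m n) + (s m n * (b - a i) - (b - a i) * s m n) := by
      noncomm_ring
    have h1 : ‖s m n * (b - a i)‖ ≤ ‖b - a i‖ := by
      calc ‖s m n * (b - a i)‖ ≤ ‖s m n‖ * ‖b - a i‖ := norm_mul_le _ _
        _ ≤ 1 * ‖b - a i‖ := by gcongr; exact hnorm1 m n
        _ = ‖b - a i‖ := one_mul _
    have h2 : ‖(b - a i) * s m n‖ ≤ ‖b - a i‖ := by
      calc ‖(b - a i) * s m n‖ ≤ ‖b - a i‖ * ‖s m n‖ := norm_mul_le _ _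
        _ ≤ ‖b - a i‖ * 1 := by gcongr; exact hnorm1 m n
        _ = ‖b - a i‖ := mul_one _
    calc ‖s m n * b - b * s m n‖
        ≤ ‖s m n * a i - a i * s m n‖ + ‖s m n * (b - a i) - (b - a i) * s m n‖ := by
          rw [hsplit2]; exact norm_add_le _ _
      _ ≤ 2 * ((2:ℝ)^m)⁻¹ + ε := by
          refine add_le_add (hcomm_ai i m n him) ?_
          calc ‖s m n * (b - a i) - (b - a i) * s m n‖
              ≤ ‖s m n * (b - a i)‖ + ‖(b - a i) * s m n‖ := norm_sub_le _ _
            _ ≤ ‖b - a i‖ + ‖b - a i‖ := add_le_add h1 h2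
            _ ≤ ε := by linarith
  -- Cauchy for contractions
  have main : ∀ c : A, ‖c‖ ≤ 1 →
      CauchySeq (fun n => u n * (c : Unitization ℂ A) * star (u n)) := by
    intro c hc
    rw [Metric.cauchySeq_iff']
    intro ε hε
    have he1 : (0:ℝ) < Real.exp 1 := Real.exp_pos 1
    obtain ⟨i, hi⟩ := hcomm_b c hc (ε / (2 * Real.exp 1)) (by positivity)
    obtain ⟨M0, hM0⟩ := exists_pow_lt_of_lt_one
      (show (0:ℝ) < ε/(4*Real.exp 1) by positivity) (show (2:ℝ)⁻¹ < 1 by norm_num)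
    refine ⟨max i M0, fun n hn => ?_⟩
    set N := max i M0 with hN
    rw [dist_eq_norm]
    have hcb := hi N n (le_max_left i M0)
    have hpow : ((2:ℝ)^N)⁻¹ < ε/(4*Real.exp 1) := by
      refine lt_of_le_of_lt ?_ hM0
      rw [← inv_pow]
      exact pow_le_pow_of_le_one (by norm_num) (by norm_num) (le_max_right i M0)
    calc ‖u n * (c : Unitization ℂ A) * star (u n) - u N * (c : Unitization ℂ A) * star (u N)‖
        ≤ Real.exp 1 * ‖s N n * c - c * s N n‖ := hkey c N n hn
      _ ≤ Real.exp 1 * (2 * ((2:ℝ)^N)⁻¹ + ε / (2 * Real.exp 1)) := by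
          exact mul_le_mul_of_nonneg_left hcb he1.le
      _ < ε := by
          rw [mul_add]
          have he : Real.exp 1 * (ε/(2*Real.exp 1)) = ε/2 := by field_simp
          have h3 : Real.exp 1 * (2 * ((2:ℝ)^N)⁻¹) < ε/2 := by
            rw [lt_div_iff₀ (by positivity)] at hpow
            nlinarith
          linarith [he.le]
  have hlim : ∀ b : A, ∃ L : Unitization ℂ A,
      Tendsto (fun n => u n * (b : Unitization ℂ A) * star (u n)) atTop (𝓝 L) := by
    intro b
    have hr : (0:ℝ) < ‖b‖ + 1 := by positivity
    set c := (‖b‖ + 1)⁻¹ • b with hc_def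
    have hc : ‖c‖ ≤ 1 := by
      rw [hc_def, norm_smul, Real.norm_eq_abs, abs_of_pos (by positivity : (0:ℝ) < (‖b‖+1)⁻¹)]
      rw [inv_mul_le_iff₀ hr]
      linarith [norm_nonneg b]
    obtain ⟨L, hL⟩ := cauchySeq_tendsto_of_complete (main c hc)
    refine ⟨(‖b‖+1) • L, ?_⟩
    have hb_eq : ∀ n, u n * (b : Unitization ℂ A) * star (u n)
        = (‖b‖+1) • (u n * (c : Unitization ℂ A) * star (u n)) := by
      intro n
      have hbc : (b : Unitization ℂ A) = (‖b‖+1) • (c : Unitization ℂ A) := by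
        rw [hc_def, Unitization.inr_smul, smul_smul, mul_inv_cancel₀ hr.ne', one_smul]
      rw [hbc, mul_smul_comm, smul_mul_assoc]
    simp only [hb_eq]
    exact hL.const_smul (‖b‖+1)
  intro b
  obtain ⟨L, hL⟩ := hlim b
  have hfst_cont : Continuous (fun z : Unitization ℂ A => z.fst) := by
    refine AddMonoidHomClass.continuous_of_bound (Unitization.fstHom ℂ A) 1 fun z => ?_
    rw [one_mul]
    exact le_sup_left.trans (Unitization.norm_eq_sup z).ge
  have hfst : L.fst = 0 := by
    have h1 : Tendsto (fun n => (u n * (b : Unitization ℂ A) * star (u n)).fst) atTop (𝓝 L.fst) :=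
      (hfst_cont.tendsto L).comp hL
    have hz : ∀ n : ℕ, (u n * (b : Unitization ℂ A) * star (u n)).fst = 0 := fun n => by
      rw [Unitization.fst_mul, Unitization.fst_mul, Unitization.fst_inr, mul_zero, zero_mul]
    rw [tendsto_congr hz] at h1
    exact (tendsto_nhds_unique h1 tendsto_const_nhds)
  refine ⟨L.snd, ?_⟩
  have hLs : ((L.snd : A) : Unitization ℂ A) = L := by
    ext
    · rw [Unitization.fst_inr, hfst]
    · rw [Unitization.snd_inr]
  rw [hLs]
  have : (fun n => u n * (b : Unitization ℂ A) * star (u n))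
      = fun n => exp (Complex.I • ((∑ k ∈ Finset.range n, t k • x k : A) : Unitization ℂ A)) *
            (b : Unitization ℂ A) *
            star (exp (Complex.I • ((∑ k ∈ Finset.range n, t k • x k : A) : Unitization ℂ A))) := by
    funext n
    rw [hrange n]
  rw [← this]
  exact hL


set_option maxHeartbeats 1000000
set_option synthInstance.maxHeartbeats 1000000

theorem stmt8 {A : Type*} [NonUnitalCStarAlgebra A] [PartialOrder A] [StarOrderedRing A]
    (a : ℕ → A) (ha_norm : ∀ i, ‖a i‖ ≤ 1)
    (ha_dense : ∀ b : A, ‖b‖ ≤ 1 → ∀ ε > (0 : ℝ), ∃ i, ‖b - a i‖ < ε)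
    (x : ℕ → A) (hx_pos : ∀ n, 0 ≤ x n) (hx_norm : ∀ n, ‖x n‖ ≤ 1)
    (hx_orth : ∀ m n, m ≠ n → x m * x n = 0)
    (hx_comm : ∀ n i, i ≤ n → ‖x n * a i - a i * x n‖ ≤ ((2 : ℝ) ^ n)⁻¹)
    (t : ℕ → ℝ) (ht : ∀ n, |t n| ≤ 1) :
    ∃ α : A ≃⋆ₐ[ℂ] A, ∀ b : A,
      Tendsto (fun n =>
          ‖((α b : A) : Unitization ℂ A) -
            NormedSpace.exp
                (Complex.I • ((∑ k ∈ Finset.range n, t k • x k : A) : Unitization ℂ A)) *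
              (b : Unitization ℂ A) *
              star (NormedSpace.exp
                (Complex.I • ((∑ k ∈ Finset.range n, t k • x k : A) : Unitization ℂ A)))‖)
        atTop (nhds 0) := by
  let +nondep : NormedAlgebra ℚ (Unitization ℂ A) := .restrictScalars ℚ ℂ (Unitization ℂ A)
  choose ψ hψ using aux_main a ha_norm ha_dense x hx_pos hx_norm hx_orth hx_comm t ht
  choose φ hφ using aux_main a ha_norm ha_dense x hx_pos hx_norm hx_orth hx_comm
    (fun n => -(t n)) (fun n => by simpa using ht n)
  set u : ℕ → Unitization ℂ A := fun n =>
    exp (Complex.I • ((∑ k ∈ Finset.range n, t k • x k : A) : Unitization ℂ A)) with hu_def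
  have hxsa : ∀ k, IsSelfAdjoint (x k) := fun k => .of_nonneg (hx_pos k)
  have hsa : ∀ n, IsSelfAdjoint (∑ k ∈ Finset.range n, t k • x k : A) := by
    intro n
    rw [IsSelfAdjoint, star_sum]
    exact Finset.sum_congr rfl fun k _ => by
      rw [star_smul, star_trivial, (hxsa k).star_eq]
  have hSsa : ∀ n, IsSelfAdjoint ((∑ k ∈ Finset.range n, t k • x k : A) : Unitization ℂ A) :=
    fun n => (hsa n).inr ℂ
  have hu : ∀ n, u n ∈ unitary (Unitization ℂ A) := fun n =>
    exp_mem_unitary_of_mem_skewAdjoint ((hSsa n).smul_mem_skewAdjoint Complex.conj_I)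
  have hstar : ∀ n, star (u n) =
      exp (Complex.I • ((∑ k ∈ Finset.range n, -(t k) • x k : A) : Unitization ℂ A)) := by
    intro n
    show star (exp (Complex.I • ((∑ k ∈ Finset.range n, t k • x k : A) : Unitization ℂ A))) = _
    rw [star_exp]
    congr 1
    have hneg : (∑ k ∈ Finset.range n, -(t k) • x k : A)
        = -(∑ k ∈ Finset.range n, t k • x k : A) := by
      rw [← Finset.sum_neg_distrib]
      exact Finset.sum_congr rfl fun k _ => (neg_smul (t k) (x k))
    rw [hneg, Unitization.inr_neg, star_smul, Complex.star_def, Complex.conj_I,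
      (hSsa n).star_eq, neg_smul, ← smul_neg]
  -- rewrite hφ in terms of star (u n)
  have hφ' : ∀ b : A, Tendsto (fun n => star (u n) * (b : Unitization ℂ A) * u n)
      atTop (𝓝 ((φ b : A) : Unitization ℂ A)) := by
    intro b
    have h := hφ b
    simp only [← hstar] at h
    simpa only [star_star] using h
  have hconj_norm : ∀ w : Unitization ℂ A, w ∈ unitary (Unitization ℂ A) →
      ∀ X Y : Unitization ℂ A, ‖w * X * star w - Y‖ = ‖X - star w * Y * w‖ := by
    intro w hw X Y
    have h1 : w * star w = 1 := Unitary.mul_star_self_of_mem hw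
    have h2 : w * (X - star w * Y * w) * star w = w * X * star w - Y := by
      rw [mul_sub, sub_mul]
      congr 1
      calc w * (star w * Y * w) * star w = (w * star w) * Y * (w * star w) := by noncomm_ring
        _ = Y := by rw [h1, one_mul, mul_one]
    rw [← h2, CStarRing.norm_mul_mem_unitary _ (Unitary.star_mem hw),
      CStarRing.norm_mem_unitary_mul _ hw]
  have left_inv : ∀ b, φ (ψ b) = b := by
    intro b
    refine Unitization.inr_injective (tendsto_nhds_unique (hφ' (ψ b)) ?_)
    rw [tendsto_iff_norm_sub_tendsto_zero]
    have heq : ∀ n, ‖star (u n) * ((ψ b : A) : Unitization ℂ A) * u n - (b : Unitization ℂ A)‖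
        = ‖(u n * (b : Unitization ℂ A) * star (u n)) - ((ψ b : A) : Unitization ℂ A)‖ := by
      intro n
      have := hconj_norm (star (u n)) (Unitary.star_mem (hu n))
        ((ψ b : A) : Unitization ℂ A) (b : Unitization ℂ A)
      rw [star_star] at this
      rw [this, norm_sub_rev]
    simp only [heq]
    exact tendsto_iff_norm_sub_tendsto_zero.mp (hψ b)
  have right_inv : ∀ b, ψ (φ b) = b := by
    intro b
    refine Unitization.inr_injective (tendsto_nhds_unique (hψ (φ b)) ?_)
    rw [tendsto_iff_norm_sub_tendsto_zero]
    have heq : ∀ n, ‖u n * ((φ b : A) : Unitization ℂ A) * star (u n) - (b : Unitization ℂ A)‖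
        = ‖(star (u n) * (b : Unitization ℂ A) * u n) - ((φ b : A) : Unitization ℂ A)‖ := by
      intro n
      have := hconj_norm (u n) (hu n) ((φ b : A) : Unitization ℂ A) (b : Unitization ℂ A)
      rw [this, norm_sub_rev]
    simp only [hu_def] at heq
    simp only [heq]
    exact tendsto_iff_norm_sub_tendsto_zero.mp (hφ' b)
  have hadd : ∀ b c, ψ (b + c) = ψ b + ψ c := by
    intro b c
    refine Unitization.inr_injective (tendsto_nhds_unique (hψ (b + c)) ?_)
    rw [Unitization.inr_add]
    have h := (hψ b).add (hψ c)
    simpa only [Unitization.inr_add, mul_add, add_mul] using h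
  have hmul : ∀ b c, ψ (b * c) = ψ b * ψ c := by
    intro b c
    refine Unitization.inr_injective (tendsto_nhds_unique (hψ (b * c)) ?_)
    have h := (hψ b).mul (hψ c)
    rw [← Unitization.inr_mul] at h
    have heq : ∀ n, (u n * ((b : A) : Unitization ℂ A) * star (u n)) *
        (u n * ((c : A) : Unitization ℂ A) * star (u n))
        = u n * ((b * c : A) : Unitization ℂ A) * star (u n) := by
      intro n
      have h1 : star (u n) * u n = 1 := Unitary.star_mul_self_of_mem (hu n)
      rw [Unitization.inr_mul]
      calc (u n * (b : Unitization ℂ A) * star (u n)) * (u n * (c : Unitization ℂ A) * star (u n))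
          = u n * (b : Unitization ℂ A) * (star (u n) * u n) * (c : Unitization ℂ A) * star (u n) := by
            noncomm_ring
        _ = u n * ((b : Unitization ℂ A) * (c : Unitization ℂ A)) * star (u n) := by
            rw [h1, mul_one]; noncomm_ring
    simp only [hu_def] at heq
    simpa only [heq] using h
  have hsmul : ∀ (r : ℂ) (b : A), ψ (r • b) = r • ψ b := by
    intro r b
    refine Unitization.inr_injective (tendsto_nhds_unique (hψ (r • b)) ?_)
    rw [Unitization.inr_smul]
    have h := (hψ b).const_smul r
    simpa only [Unitization.inr_smul, mul_smul_comm, smul_mul_assoc] using h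
  have hstar_map : ∀ b, ψ (star b) = star (ψ b) := by
    intro b
    refine Unitization.inr_injective (tendsto_nhds_unique (hψ (star b)) ?_)
    have h := (hψ b).star
    rw [← Unitization.inr_star] at h
    have heq : ∀ n, star (u n * ((b : A) : Unitization ℂ A) * star (u n))
        = u n * ((star b : A) : Unitization ℂ A) * star (u n) := by
      intro n
      rw [star_mul, star_mul, star_star, Unitization.inr_star, mul_assoc]
    simp only [hu_def] at heq
    simpa only [heq] using h
  refine ⟨StarAlgEquiv.mk (StarRingEquiv.mk (RingEquiv.mk ⟨ψ, φ, left_inv, right_inv⟩ (fun b c => hmul b c)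
    (fun b c => hadd b c)) hstar_map) hsmul, ?_⟩
  intro b
  have h := tendsto_iff_norm_sub_tendsto_zero.mp (hψ b)
  simp only [norm_sub_rev] at h
  exact h
end

section
/- Let A be a C*-algebra, let (a_i)_{i∈ℕ} be a sequence dense in the closed unit ball of A, and let (x_n)_{n∈ℕ} be a sequence of positive contractions in A with x_n x_m = 0 for n ≠ m and ‖x_n a_i − a_i x_n‖ ≤ 2^{−n} for i ≤ n. Let t, s : ℕ → [−1,1] satisfy ∑_n |t_n − s_n| < ∞. Then the series ∑_n (t_n − s_n) x_n converges in A to a selfadjoint element h. Moreover, if α and β are *-algebra automorphisms of A such that for every a ∈ A, ‖α(a) − exp(i∑_{k≤n} t_k x_k) a exp(−i∑_{k≤n} t_k x_k)‖ → 0 and ‖β(a) − exp(i∑_{k≤n} s_k x_k) a exp(−i∑_{k≤n} s_k x_k)‖ → 0 as n → ∞, then with u = exp(ih) (a unitary in the unitization Ã) one has α(a) = u β(a) u* for every a ∈ A. -/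
open Filter Topology

set_option maxHeartbeats 1000000
set_option synthInstance.maxHeartbeats 400000

theorem stmt9 {A : Type*} [NonUnitalCStarAlgebra A] [PartialOrder A] [StarOrderedRing A]
    (a : ℕ → A) (ha_norm : ∀ i, ‖a i‖ ≤ 1)
    (ha_dense : ∀ b : A, ‖b‖ ≤ 1 → ∀ ε > (0 : ℝ), ∃ i, ‖b - a i‖ < ε)
    (x : ℕ → A) (hx_pos : ∀ n, 0 ≤ x n) (hx_norm : ∀ n, ‖x n‖ ≤ 1)
    (hx_orth : ∀ m n, m ≠ n → x m * x n = 0)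
    (hx_comm : ∀ n i, i ≤ n → ‖x n * a i - a i * x n‖ ≤ ((2 : ℝ) ^ n)⁻¹)
    (t s : ℕ → ℝ) (ht : ∀ n, |t n| ≤ 1) (hs : ∀ n, |s n| ≤ 1)
    (hts : Summable fun n => |t n - s n|) :
    ∃ h : A, HasSum (fun n => (t n - s n) • x n) h ∧ IsSelfAdjoint h ∧
      ∀ α β : A ≃⋆ₐ[ℂ] A,
        (∀ b : A,
          Tendsto (fun n =>
              ‖((α b : A) : Unitization ℂ A) -
                NormedSpace.exp
                    (Complex.I • ((∑ k ∈ Finset.range n, t k • x k : A) : Unitization ℂ A)) *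
                  (b : Unitization ℂ A) *
                  NormedSpace.exp
                    (-(Complex.I • ((∑ k ∈ Finset.range n, t k • x k : A) : Unitization ℂ A)))‖)
            atTop (nhds 0)) →
        (∀ b : A,
          Tendsto (fun n =>
              ‖((β b : A) : Unitization ℂ A) -
                NormedSpace.exp
                    (Complex.I • ((∑ k ∈ Finset.range n, s k • x k : A) : Unitization ℂ A)) *
                  (b : Unitization ℂ A) *
                  NormedSpace.exp
                    (-(Complex.I • ((∑ k ∈ Finset.range n, s k • x k : A) : Unitization ℂ A)))‖)
            atTop (nhds 0)) →
        ∀ b : A,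
          ((α b : A) : Unitization ℂ A) =
            NormedSpace.exp (Complex.I • (h : Unitization ℂ A)) *
              ((β b : A) : Unitization ℂ A) *
              star (NormedSpace.exp (Complex.I • (h : Unitization ℂ A))) := by
  classical
  let +nondep : NormedAlgebra ℚ (Unitization ℂ A) := .restrictScalars ℚ ℂ (Unitization ℂ A)
  -- Summability
  have hsummable : Summable (fun n => (t n - s n) • x n) := by
    apply Summable.of_norm_bounded hts
    intro n
    rw [norm_smul, Real.norm_eq_abs]
    calc |t n - s n| * ‖x n‖ ≤ |t n - s n| * 1 :=
          mul_le_mul_of_nonneg_left (hx_norm n) (abs_nonneg _)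
      _ = |t n - s n| := mul_one _
  set h : A := ∑' n, (t n - s n) • x n with hh
  have hHasSum : HasSum (fun n => (t n - s n) • x n) h := hsummable.hasSum
  -- self-adjointness
  have hx_sa : ∀ n, IsSelfAdjoint (x n) := fun n => IsSelfAdjoint.of_nonneg (hx_pos n)
  have hsa : IsSelfAdjoint h := by
    have := hHasSum.star
    have heq : (fun n => star ((t n - s n) • x n)) = fun n => (t n - s n) • x n := by
      funext n
      rw [star_smul, (hx_sa n).star_eq, star_trivial]
    rw [heq] at this
    exact (hHasSum.unique this).symm
  refine ⟨h, hHasSum, hsa, ?_⟩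
  intro α β hα hβ b
  -- commuting facts
  have hxcomm : ∀ m n, Commute (x m) (x n) := by
    intro m n
    rcases eq_or_ne m n with rfl | hmn
    · exact Commute.refl _
    · exact (hx_orth m n hmn).trans (hx_orth n m hmn.symm).symm
  set P : (ℕ → ℝ) → ℕ → A := fun c n => ∑ k ∈ Finset.range n, c k • x k with hP
  have hPcomm : ∀ (c d : ℕ → ℝ) n, Commute (P c n) (P d n) := by
    intro c d n
    apply Commute.sum_left
    intro i _
    apply Commute.sum_right
    intro j _
    exact ((hxcomm i j).smul_left (c i)).smul_right (d j)
  -- partial sums of the difference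
  have hPsub : ∀ n, P (fun k => t k - s k) n = P t n - P s n := by
    intro n
    simp only [hP, ← Finset.sum_sub_distrib, sub_smul]
  -- commuting in the unitization
  have hcommU : ∀ n, Commute (Complex.I • ((P t n : A) : Unitization ℂ A))
      (Complex.I • ((P s n : A) : Unitization ℂ A)) := by
    intro n
    have hc : Commute ((P t n : A) : Unitization ℂ A) ((P s n : A) : Unitization ℂ A) := by
      show _ * _ = _ * _
      rw [← Unitization.inr_mul, ← Unitization.inr_mul, (hPcomm t s n).eq]
    exact (hc.smul_left Complex.I).smul_right Complex.I
  -- splitting the exponentials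
  have hDsplitT : ∀ n, Complex.I • ((P (fun k => t k - s k) n : A) : Unitization ℂ A) =
      Complex.I • ((P t n : A) : Unitization ℂ A) +
        -(Complex.I • ((P s n : A) : Unitization ℂ A)) := by
    intro n
    rw [hPsub, Unitization.inr_sub, smul_sub, sub_eq_add_neg]
  have hexpD : ∀ n, NormedSpace.exp (Complex.I • ((P (fun k => t k - s k) n : A) : Unitization ℂ A)) =
      NormedSpace.exp (Complex.I • ((P t n : A) : Unitization ℂ A)) *
        NormedSpace.exp (-(Complex.I • ((P s n : A) : Unitization ℂ A))) := by
    intro n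
    rw [hDsplitT, NormedSpace.exp_add_of_commute ((hcommU n).neg_right)]
  have hexpDneg : ∀ n,
      NormedSpace.exp (-(Complex.I • ((P (fun k => t k - s k) n : A) : Unitization ℂ A))) =
      NormedSpace.exp (Complex.I • ((P s n : A) : Unitization ℂ A)) *
        NormedSpace.exp (-(Complex.I • ((P t n : A) : Unitization ℂ A))) := by
    intro n
    have : -(Complex.I • ((P (fun k => t k - s k) n : A) : Unitization ℂ A)) =
        Complex.I • ((P s n : A) : Unitization ℂ A) +
          -(Complex.I • ((P t n : A) : Unitization ℂ A)) := by
      rw [hDsplitT]; abel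
    rw [this, NormedSpace.exp_add_of_commute ((hcommU n).symm.neg_right)]
  -- inverse cancellation
  have hinv : ∀ y : Unitization ℂ A, ∀ z : Unitization ℂ A,
      NormedSpace.exp (-y) * (NormedSpace.exp y * z) = z := by
    intro y z
    rw [← mul_assoc, ← NormedSpace.exp_add_of_commute ((Commute.refl y).neg_left),
      neg_add_cancel, NormedSpace.exp_zero, one_mul]
  -- key algebraic identity
  have key : ∀ n : ℕ,
      NormedSpace.exp (Complex.I • ((P t n : A) : Unitization ℂ A)) *
          (b : Unitization ℂ A) *
          NormedSpace.exp (-(Complex.I • ((P t n : A) : Unitization ℂ A))) =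
      NormedSpace.exp (Complex.I • ((P (fun k => t k - s k) n : A) : Unitization ℂ A)) *
          (NormedSpace.exp (Complex.I • ((P s n : A) : Unitization ℂ A)) *
            (b : Unitization ℂ A) *
            NormedSpace.exp (-(Complex.I • ((P s n : A) : Unitization ℂ A)))) *
          NormedSpace.exp (-(Complex.I • ((P (fun k => t k - s k) n : A) : Unitization ℂ A))) := by
    intro n
    rw [hexpD, hexpDneg]
    simp only [mul_assoc, hinv]
  -- limits
  have hDlim : Tendsto (fun n => P (fun k => t k - s k) n) atTop (𝓝 h) := by
    simpa only [hP] using hHasSum.tendsto_sum_nat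
  have hinr : Tendsto (fun n => ((P (fun k => t k - s k) n : A) : Unitization ℂ A)) atTop
      (𝓝 ((h : A) : Unitization ℂ A)) :=
    ((Unitization.isometry_inr (𝕜 := ℂ) (A := A)).continuous.tendsto _).comp hDlim
  have hexpDlim : Tendsto
      (fun n => NormedSpace.exp (Complex.I • ((P (fun k => t k - s k) n : A) : Unitization ℂ A)))
      atTop (𝓝 (NormedSpace.exp (Complex.I • ((h : A) : Unitization ℂ A)))) :=
    (NormedSpace.exp_continuous.tendsto _).comp (hinr.const_smul Complex.I)
  have hexpDneglim : Tendsto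
      (fun n => NormedSpace.exp (-(Complex.I • ((P (fun k => t k - s k) n : A) : Unitization ℂ A))))
      atTop (𝓝 (NormedSpace.exp (-(Complex.I • ((h : A) : Unitization ℂ A))))) :=
    (NormedSpace.exp_continuous.tendsto _).comp (hinr.const_smul Complex.I).neg
  have hβlim : Tendsto (fun n =>
      NormedSpace.exp (Complex.I • ((P s n : A) : Unitization ℂ A)) *
        (b : Unitization ℂ A) *
        NormedSpace.exp (-(Complex.I • ((P s n : A) : Unitization ℂ A)))) atTop
      (𝓝 ((β b : A) : Unitization ℂ A)) := by
    have h0 := tendsto_zero_iff_norm_tendsto_zero.mpr (hβ b)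
    have := Tendsto.sub (tendsto_const_nhds
      (x := ((β b : A) : Unitization ℂ A)) (f := atTop)) h0
    simpa [hP] using this
  have hαlim : Tendsto (fun n =>
      NormedSpace.exp (Complex.I • ((P t n : A) : Unitization ℂ A)) *
        (b : Unitization ℂ A) *
        NormedSpace.exp (-(Complex.I • ((P t n : A) : Unitization ℂ A)))) atTop
      (𝓝 ((α b : A) : Unitization ℂ A)) := by
    have h0 := tendsto_zero_iff_norm_tendsto_zero.mpr (hα b)
    have := Tendsto.sub (tendsto_const_nhds
      (x := ((α b : A) : Unitization ℂ A)) (f := atTop)) h0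
    simpa [hP] using this
  have hαlim' : Tendsto (fun n =>
      NormedSpace.exp (Complex.I • ((P t n : A) : Unitization ℂ A)) *
        (b : Unitization ℂ A) *
        NormedSpace.exp (-(Complex.I • ((P t n : A) : Unitization ℂ A)))) atTop
      (𝓝 (NormedSpace.exp (Complex.I • ((h : A) : Unitization ℂ A)) *
        ((β b : A) : Unitization ℂ A) *
        NormedSpace.exp (-(Complex.I • ((h : A) : Unitization ℂ A))))) := by
    have := (hexpDlim.mul hβlim).mul hexpDneglim
    refine this.congr fun n => (key n).symm
  have hmain := tendsto_nhds_unique hαlim hαlim'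
  have hstar : star (NormedSpace.exp (Complex.I • ((h : A) : Unitization ℂ A))) =
      NormedSpace.exp (-(Complex.I • ((h : A) : Unitization ℂ A))) := by
    rw [NormedSpace.star_exp, star_smul, Complex.star_def, Complex.conj_I,
      ← Unitization.inr_star, hsa.star_eq, neg_smul]
  rw [hmain, hstar]
end

section
/- Let A be a C*-algebra, let (x_n)_{n∈ℕ} be a central sequence of selfadjoint contractions in A, and let f : ℝ → ℝ be a continuous function with f(0) = 0. Then the sequence (f(x_n))_{n∈ℕ}, obtained by applying the continuous functional calculus, is a central sequence in A. Moreover, if (x_n) is hypercentral, then (f(x_n)) is hypercentral. -/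
open Filter Topology Polynomial

/-- A central sequence: bounded and asymptotically commuting with every element. -/
def IsCentralSeq {A : Type*} [NonUnitalCStarAlgebra A] (x : ℕ → A) : Prop :=
  (∃ M : ℝ, ∀ n, ‖x n‖ ≤ M) ∧
    ∀ a : A, Tendsto (fun n => ‖x n * a - a * x n‖) atTop (nhds 0)

/-- A hypercentral sequence: central, and its commutators with any central sequence
converge strictly to `0`. -/
def IsHypercentralSeq {A : Type*} [NonUnitalCStarAlgebra A] (x : ℕ → A) : Prop :=
  IsCentralSeq x ∧
    ∀ y : ℕ → A, IsCentralSeq y → ∀ a : A,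
      Tendsto (fun n => ‖a * (x n * y n - y n * x n)‖) atTop (nhds 0) ∧
      Tendsto (fun n => ‖(x n * y n - y n * x n) * a‖) atTop (nhds 0)

section Aux

variable {A : Type*} [NonUnitalCStarAlgebra A]

/-- `npow1 x k = x ^ (k+1)` in a non-unital algebra. -/
def npow1 (x : A) : ℕ → A
  | 0 => x
  | (k+1) => npow1 x k * x

lemma npow1_comm (x : A) (k : ℕ) : npow1 x k * x = x * npow1 x k := by
  induction k with
  | zero => rfl
  | succ k ih =>
    show npow1 x k * x * x = x * (npow1 x k * x)
    rw [ih, mul_assoc, ih]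

lemma IsCentralSeq.bound {x : ℕ → A} (h : IsCentralSeq x) :
    ∃ M : ℝ, 0 ≤ M ∧ ∀ n, ‖x n‖ ≤ M := by
  obtain ⟨M, hM⟩ := h.1
  exact ⟨max M 0, le_max_right _ _, fun n => (hM n).trans (le_max_left _ _)⟩

lemma IsCentralSeq.mul {x y : ℕ → A} (hx : IsCentralSeq x) (hy : IsCentralSeq y) :
    IsCentralSeq fun n => x n * y n := by
  obtain ⟨M, hM0, hM⟩ := hx.bound
  obtain ⟨N, hN0, hN⟩ := hy.bound
  constructor
  · exact ⟨M * N, fun n =>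
      (norm_mul_le _ _).trans (mul_le_mul (hM n) (hN n) (norm_nonneg _) hM0)⟩
  · intro a
    have key : ∀ n, ‖x n * y n * a - a * (x n * y n)‖ ≤
        M * ‖y n * a - a * y n‖ + ‖x n * a - a * x n‖ * N := by
      intro n
      have hid : x n * y n * a - a * (x n * y n) =
          x n * (y n * a - a * y n) + (x n * a - a * x n) * y n := by
        simp only [mul_sub, sub_mul, mul_assoc]
        abel
      rw [hid]
      refine (norm_add_le _ _).trans (add_le_add ?_ ?_)
      · exact (norm_mul_le _ _).trans (mul_le_mul_of_nonneg_right (hM n) (norm_nonneg _))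
      · exact (norm_mul_le _ _).trans (mul_le_mul_of_nonneg_left (hN n) (norm_nonneg _))
    have lim : Tendsto (fun n => M * ‖y n * a - a * y n‖ + ‖x n * a - a * x n‖ * N)
        atTop (nhds 0) := by
      have := ((hy.2 a).const_mul M).add ((hx.2 a).mul_const N)
      simpa using this
    exact squeeze_zero (fun n => norm_nonneg _) key lim

lemma central_npow1 {x : ℕ → A} (hx : IsCentralSeq x) (k : ℕ) :
    IsCentralSeq fun n => npow1 (x n) k := by
  induction k with
  | zero => exact hx
  | succ k ih => exact ih.mul hx

lemma comm_split_left (b u v w : A) (h : u * v = v * u) :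
    b * ((u * v) * w - w * (u * v)) =
      b * (v * (u * w) - (u * w) * v) + (b * (u * w - w * u)) * v := by
  have h1 : ∀ s : A, u * (v * s) = v * (u * s) := fun s => by
    rw [← mul_assoc, h, mul_assoc]
  simp only [mul_sub, sub_mul, mul_assoc, h1]
  abel

lemma comm_split_right (b u v w : A) (h : u * v = v * u) :
    ((u * v) * w - w * (u * v)) * b =
      v * ((u * w - w * u) * b) + (v * (w * u) - (w * u) * v) * b := by
  have h1 : ∀ s : A, u * (v * s) = v * (u * s) := fun s => by
    rw [← mul_assoc, h, mul_assoc]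
  simp only [mul_sub, sub_mul, mul_assoc, h1]
  abel

lemma hyper_npow1 {x : ℕ → A} (hx : IsHypercentralSeq x) (m : ℕ) :
    ∀ y : ℕ → A, IsCentralSeq y → ∀ a : A,
      Tendsto (fun n => ‖a * (npow1 (x n) m * y n - y n * npow1 (x n) m)‖) atTop (nhds 0) ∧
      Tendsto (fun n => ‖(npow1 (x n) m * y n - y n * npow1 (x n) m) * a‖) atTop (nhds 0) := by
  induction m with
  | zero => exact hx.2
  | succ m ih =>
    intro y hy a
    obtain ⟨M, hM0, hM⟩ := hx.1.bound
    have hu : ∀ n, npow1 (x n) (m + 1) = npow1 (x n) m * x n := fun n => rfl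
    constructor
    · set z : ℕ → A := fun n => npow1 (x n) m * y n with hz
      have hzc : IsCentralSeq z := (central_npow1 hx.1 m).mul hy
      have key : ∀ n, ‖a * (npow1 (x n) (m+1) * y n - y n * npow1 (x n) (m+1))‖ ≤
          ‖a * (x n * z n - z n * x n)‖ +
            ‖a * (npow1 (x n) m * y n - y n * npow1 (x n) m)‖ * M := by
        intro n
        rw [hu n, comm_split_left a (npow1 (x n) m) (x n) (y n) (npow1_comm _ _)]
        refine (norm_add_le _ _).trans (add_le_add le_rfl ?_)
        exact (norm_mul_le _ _).trans (mul_le_mul_of_nonneg_left (hM n) (norm_nonneg _))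
      have lim := ((hx.2 z hzc a).1).add (((ih y hy a).1).mul_const M)
      refine squeeze_zero (fun n => norm_nonneg _) key (by simpa using lim)
    · set z : ℕ → A := fun n => y n * npow1 (x n) m with hz
      have hzc : IsCentralSeq z := hy.mul (central_npow1 hx.1 m)
      have key : ∀ n, ‖(npow1 (x n) (m+1) * y n - y n * npow1 (x n) (m+1)) * a‖ ≤
          M * ‖(npow1 (x n) m * y n - y n * npow1 (x n) m) * a‖ +
            ‖(x n * z n - z n * x n) * a‖ := by
        intro n
        rw [hu n, comm_split_right a (npow1 (x n) m) (x n) (y n) (npow1_comm _ _)]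
        refine (norm_add_le _ _).trans (add_le_add ?_ le_rfl)
        exact (norm_mul_le _ _).trans (mul_le_mul_of_nonneg_right (hM n) (norm_nonneg _))
      have lim := (((ih y hy a).2).const_mul M).add ((hx.2 z hzc a).2)
      refine squeeze_zero (fun n => norm_nonneg _) key (by simpa using lim)

lemma cfcₙ_npow1 [PartialOrder A] [StarOrderedRing A] {x : A} (hx : IsSelfAdjoint x) (k : ℕ) :
    cfcₙ (fun t : ℝ => t ^ (k + 1)) x = npow1 x k := by
  induction k with
  | zero =>
    have : (fun t : ℝ => t ^ (0 + 1)) = fun t : ℝ => t := by ext t; ring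
    rw [this, cfcₙ_id' ℝ x]
    rfl
  | succ k ih =>
    have h1 : (fun t : ℝ => t ^ (k + 1 + 1)) = fun t : ℝ => t ^ (k + 1) * t := by ext t; ring
    rw [h1, cfcₙ_mul _ _ x, ih, cfcₙ_id' ℝ x]
    rfl

lemma quasispec_mem_Icc [PartialOrder A] [StarOrderedRing A] {x : A}
    (hx : IsSelfAdjoint x) (h1 : ‖x‖ ≤ 1) {t : ℝ}
    (ht : t ∈ quasispectrum ℝ x) : t ∈ Set.Icc (-1 : ℝ) 1 := by
  have h := norm_apply_le_norm_cfcₙ (id : ℝ → ℝ) x ht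
  rw [cfcₙ_id ℝ x] at h
  rw [Real.norm_eq_abs] at h
  exact abs_le.mp (h.trans h1) |>.imp (fun h => h) (fun h => h) |> fun h => Set.mem_Icc.mpr h

lemma cfcₙ_polyeval [PartialOrder A] [StarOrderedRing A] {x : A} (hx : IsSelfAdjoint x)
    (q : ℝ[X]) (hq : q.coeff 0 = 0) :
    cfcₙ (fun t => q.eval t) x
      = ∑ k ∈ Finset.range q.natDegree, q.coeff (k + 1) • npow1 x k := by
  have hfun : (fun t : ℝ => q.eval t)
      = ∑ k ∈ Finset.range q.natDegree, (fun t : ℝ => q.coeff (k + 1) * t ^ (k + 1)) := by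
    ext t
    rw [Finset.sum_apply]
    rw [Polynomial.eval_eq_sum_range, Finset.sum_range_succ']
    simp [hq]
  rw [hfun, cfcₙ_sum _ x _ (fun i _ => by fun_prop) (fun i _ => by simp)]
  refine Finset.sum_congr rfl fun k _ => ?_
  rw [cfcₙ_const_mul _ _ x, cfcₙ_npow1 hx k]

lemma master [PartialOrder A] [StarOrderedRing A] {x : ℕ → A}
    (hsa : ∀ n, IsSelfAdjoint (x n)) (hnorm : ∀ n, ‖x n‖ ≤ 1)
    (φ : ℕ → A →ₗ[ℝ] A) (K : ℝ) (hK : 0 ≤ K) (hφ : ∀ n z, ‖φ n z‖ ≤ K * ‖z‖)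
    (hpow : ∀ m : ℕ, Tendsto (fun n => ‖φ n (npow1 (x n) m)‖) atTop (nhds 0))
    {f : ℝ → ℝ} (hf : Continuous f) (hf0 : f 0 = 0) :
    Tendsto (fun n => ‖φ n (cfcₙ f (x n))‖) atTop (nhds 0) := by
  rw [Metric.tendsto_atTop]
  intro ε hε
  set δ : ℝ := ε / (4 * (K + 1)) with hδdef
  have hδ : 0 < δ := by positivity
  obtain ⟨p, hp⟩ := exists_polynomial_near_of_continuousOn (-1) 1 f hf.continuousOn δ hδ
  set q : ℝ[X] := p - C (p.coeff 0) with hqdef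
  have hq0 : q.coeff 0 = 0 := by simp [hqdef]
  have hqeval : ∀ t : ℝ, q.eval t = p.eval t - p.coeff 0 := by intro t; simp [hqdef]
  have hc0 : |p.coeff 0| < δ := by
    have h := hp 0 (by norm_num)
    simpa [hf0, Polynomial.coeff_zero_eq_eval_zero] using h
  have happrox : ∀ t ∈ Set.Icc (-1 : ℝ) 1, |f t - q.eval t| ≤ 2 * δ := by
    intro t ht
    rw [hqeval]
    have h1 : f t - (p.eval t - p.coeff 0) = (f t - p.eval t) + p.coeff 0 := by ring
    rw [h1]
    calc |(f t - p.eval t) + p.coeff 0| ≤ |f t - p.eval t| + |p.coeff 0| := abs_add_le _ _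
      _ ≤ δ + δ := add_le_add (abs_sub_comm (p.eval t) (f t) ▸ (hp t ht).le) hc0.le
      _ = 2 * δ := by ring
  have hdiff : ∀ n, ‖cfcₙ f (x n) - cfcₙ (fun t => q.eval t) (x n)‖ ≤ 2 * δ := by
    intro n
    rw [← cfcₙ_sub f (fun t => q.eval t) (x n) hf.continuousOn (by simp [hf0])
      (by fun_prop) (by show eval 0 q = 0; rw [← Polynomial.coeff_zero_eq_eval_zero]; exact hq0)]
    refine norm_cfcₙ_le fun t ht => ?_
    exact happrox t (quasispec_mem_Icc (hsa n) (hnorm n) ht)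
  -- polynomial part goes to zero
  have hqx : ∀ n, cfcₙ (fun t => q.eval t) (x n)
      = ∑ k ∈ Finset.range q.natDegree, q.coeff (k + 1) • npow1 (x n) k :=
    fun n => cfcₙ_polyeval (hsa n) q hq0
  have hbound : ∀ n, ‖φ n (cfcₙ (fun t => q.eval t) (x n))‖ ≤
      ∑ k ∈ Finset.range q.natDegree, |q.coeff (k + 1)| * ‖φ n (npow1 (x n) k)‖ := by
    intro n
    rw [hqx n, map_sum]
    refine (norm_sum_le _ _).trans (le_of_eq (Finset.sum_congr rfl fun k _ => ?_))
    rw [map_smul, norm_smul, Real.norm_eq_abs]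
  have hlim : Tendsto (fun n => ∑ k ∈ Finset.range q.natDegree,
      |q.coeff (k + 1)| * ‖φ n (npow1 (x n) k)‖) atTop (nhds 0) := by
    have := tendsto_finset_sum (Finset.range q.natDegree)
      (fun k _ => (hpow k).const_mul |q.coeff (k + 1)|)
    simpa using this
  have hq2 : Tendsto (fun n => ‖φ n (cfcₙ (fun t => q.eval t) (x n))‖) atTop (nhds 0) :=
    squeeze_zero (fun n => norm_nonneg _) hbound hlim
  rw [Metric.tendsto_atTop] at hq2
  obtain ⟨N, hN⟩ := hq2 (ε / 2) (by positivity)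
  refine ⟨N, fun n hn => ?_⟩
  have h2 : ‖φ n (cfcₙ (fun t => q.eval t) (x n))‖ < ε / 2 := by
    have := hN n hn
    rwa [Real.dist_eq, sub_zero, abs_of_nonneg (norm_nonneg _)] at this
  have hKδ : K * (2 * δ) ≤ ε / 2 := by
    have hK1 : (0:ℝ) < K + 1 := by linarith
    have heq : K * (2 * δ) = ε * K / (2 * (K + 1)) := by
      rw [hδdef]; field_simp; ring
    rw [heq, div_le_div_iff₀ (by positivity) two_pos]
    nlinarith [hε.le]
  rw [Real.dist_eq, sub_zero, abs_of_nonneg (norm_nonneg _)]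
  have hsplit : φ n (cfcₙ f (x n)) =
      φ n (cfcₙ f (x n) - cfcₙ (fun t => q.eval t) (x n))
        + φ n (cfcₙ (fun t => q.eval t) (x n)) := by
    rw [← map_add, sub_add_cancel]
  calc ‖φ n (cfcₙ f (x n))‖
      ≤ ‖φ n (cfcₙ f (x n) - cfcₙ (fun t => q.eval t) (x n))‖
        + ‖φ n (cfcₙ (fun t => q.eval t) (x n))‖ := by rw [hsplit]; exact norm_add_le _ _
    _ < K * (2 * δ) + ε / 2 :=
        add_lt_add_of_le_of_lt ((hφ n _).trans (mul_le_mul_of_nonneg_left (hdiff n) hK)) h2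
    _ ≤ ε / 2 + ε / 2 := by linarith
    _ = ε := by ring
    

end Aux

theorem stmt13 {A : Type*} [NonUnitalCStarAlgebra A] [PartialOrder A] [StarOrderedRing A]
    (x : ℕ → A) (hsa : ∀ n, IsSelfAdjoint (x n)) (hnorm : ∀ n, ‖x n‖ ≤ 1)
    (hc : IsCentralSeq x)
    (f : ℝ → ℝ) (hf : Continuous f) (hf0 : f 0 = 0) :
    IsCentralSeq (fun n => cfcₙ f (x n)) ∧
      (IsHypercentralSeq x → IsHypercentralSeq fun n => cfcₙ f (x n)) := by
  have hcen : IsCentralSeq (fun n => cfcₙ f (x n)) := by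
    constructor
    · obtain ⟨C, hC⟩ := isCompact_Icc.exists_bound_of_continuousOn hf.continuousOn
      exact ⟨C, fun n => norm_cfcₙ_le fun t ht =>
        hC t (quasispec_mem_Icc (hsa n) (hnorm n) ht)⟩
    · intro a
      set φ : ℕ → A →ₗ[ℝ] A :=
        fun _ => LinearMap.mulRight ℝ a - LinearMap.mulLeft ℝ a with hφdef
      have hφapp : ∀ (n : ℕ) (z : A), φ n z = z * a - a * z := fun n z => rfl
      have hφb : ∀ (n : ℕ) (z : A), ‖φ n z‖ ≤ (2 * ‖a‖) * ‖z‖ := by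
        intro n z
        rw [hφapp n z]
        calc ‖z * a - a * z‖ ≤ ‖z * a‖ + ‖a * z‖ := norm_sub_le _ _
          _ ≤ ‖z‖ * ‖a‖ + ‖a‖ * ‖z‖ := add_le_add (norm_mul_le _ _) (norm_mul_le _ _)
          _ = (2 * ‖a‖) * ‖z‖ := by ring
      have hpow : ∀ m, Tendsto (fun n => ‖φ n (npow1 (x n) m)‖) atTop (nhds 0) := by
        intro m
        simpa only [hφapp] using (central_npow1 hc m).2 a
      have := master hsa hnorm φ (2 * ‖a‖) (by positivity) hφb hpow hf hf0
      simpa only [hφapp] using this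
  refine ⟨hcen, fun hx => ⟨hcen, fun y hy a => ?_⟩⟩
  obtain ⟨M, hM0, hM⟩ := hy.bound
  constructor
  · set φ : ℕ → A →ₗ[ℝ] A := fun n =>
      (LinearMap.mulLeft ℝ a).comp
        (LinearMap.mulRight ℝ (y n) - LinearMap.mulLeft ℝ (y n)) with hφdef
    have hφapp : ∀ (n : ℕ) (z : A), φ n z = a * (z * y n - y n * z) := fun n z => rfl
    have hφb : ∀ (n : ℕ) (z : A), ‖φ n z‖ ≤ (2 * ‖a‖ * M) * ‖z‖ := by
      intro n z
      rw [hφapp n z]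
      calc ‖a * (z * y n - y n * z)‖ ≤ ‖a‖ * ‖z * y n - y n * z‖ := norm_mul_le _ _
        _ ≤ ‖a‖ * (‖z‖ * ‖y n‖ + ‖y n‖ * ‖z‖) :=
            mul_le_mul_of_nonneg_left
              ((norm_sub_le _ _).trans (add_le_add (norm_mul_le _ _) (norm_mul_le _ _)))
              (norm_nonneg a)
        _ ≤ ‖a‖ * (‖z‖ * M + M * ‖z‖) := by
            refine mul_le_mul_of_nonneg_left ?_ (norm_nonneg a)
            gcongr <;> exact hM n
        _ = (2 * ‖a‖ * M) * ‖z‖ := by ring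
    have hpow : ∀ m, Tendsto (fun n => ‖φ n (npow1 (x n) m)‖) atTop (nhds 0) := by
      intro m
      simpa only [hφapp] using (hyper_npow1 hx m y hy a).1
    have := master hsa hnorm φ (2 * ‖a‖ * M)
      (mul_nonneg (by positivity) hM0) hφb hpow hf hf0
    simpa only [hφapp] using this
  · set φ : ℕ → A →ₗ[ℝ] A := fun n =>
      (LinearMap.mulRight ℝ a).comp
        (LinearMap.mulRight ℝ (y n) - LinearMap.mulLeft ℝ (y n)) with hφdef
    have hφapp : ∀ (n : ℕ) (z : A), φ n z = (z * y n - y n * z) * a := fun n z => rfl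
    have hφb : ∀ (n : ℕ) (z : A), ‖φ n z‖ ≤ (2 * ‖a‖ * M) * ‖z‖ := by
      intro n z
      rw [hφapp n z]
      calc ‖(z * y n - y n * z) * a‖ ≤ ‖z * y n - y n * z‖ * ‖a‖ := norm_mul_le _ _
        _ ≤ (‖z‖ * ‖y n‖ + ‖y n‖ * ‖z‖) * ‖a‖ :=
            mul_le_mul_of_nonneg_right
              ((norm_sub_le _ _).trans (add_le_add (norm_mul_le _ _) (norm_mul_le _ _)))
              (norm_nonneg a)
        _ ≤ (‖z‖ * M + M * ‖z‖) * ‖a‖ := by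
            refine mul_le_mul_of_nonneg_right ?_ (norm_nonneg a)
            gcongr <;> exact hM n
        _ = (2 * ‖a‖ * M) * ‖z‖ := by ring
    have hpow : ∀ m, Tendsto (fun n => ‖φ n (npow1 (x n) m)‖) atTop (nhds 0) := by
      intro m
      simpa only [hφapp] using (hyper_npow1 hx m y hy a).2
    have := master hsa hnorm φ (2 * ‖a‖ * M)
      (mul_nonneg (by positivity) hM0) hφb hpow hf hf0
    simpa only [hφapp] using this
end
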